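/- arXiv:math/9905093 — 8 statements merged into one kernel-verified Lean document; each statement's English description precedes it below -/
import Mathlib

section
/- Let q be a complex number with 0 < |q| < 1 and let f(w) = Σ c_{m,n} w^m q^{nw} be a finite linear combination of the functions w^m q^{nw} (m ∈ ℕ, n ∈ ℤ). If there is an integer K such that f(k) = 0 for every integer k ≥ K, then f(w) = 0 for all w ∈ ℂ (equivalently, all coefficients c_{m,n} vanish). (Interpolation property of A₀-functions, Proposition 3.1.) -/
open Filter Topology


private lemma A0_exp_eq (q : ℂ) (hq : q ≠ 0) (n : ℤ) (k : ℕ) :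
    Complex.exp ((n : ℂ) * Complex.log q * (k : ℂ)) = q ^ (n * (k : ℤ)) := by
  have h : (n : ℂ) * Complex.log q * (k : ℂ) = ((n * (k : ℤ) : ℤ) : ℂ) * Complex.log q := by
    push_cast; ring
  rw [h, Complex.exp_int_mul, Complex.exp_log hq]

/-- quotient of one basis term by the dominant term -/
private noncomputable def A0term (q : ℂ) (c : ℕ × ℤ → ℂ) (p p₀ : ℕ × ℤ) (k : ℕ) : ℂ :=
  c p * (k : ℂ) ^ p.1 * Complex.exp ((p.2 : ℂ) * Complex.log q * (k : ℂ)) /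
    ((k : ℂ) ^ p₀.1 * Complex.exp ((p₀.2 : ℂ) * Complex.log q * (k : ℂ)))

private lemma A0term_self (q : ℂ) (c : ℕ × ℤ → ℂ) (p₀ : ℕ × ℤ) :
    Tendsto (A0term q c p₀ p₀) atTop (𝓝 (c p₀)) := by
  apply Tendsto.congr' _ (tendsto_const_nhds (x := c p₀))
  filter_upwards [eventually_ge_atTop 1] with k hk
  have hk0 : (k : ℂ) ≠ 0 := Nat.cast_ne_zero.2 (by omega)
  have hX : (k : ℂ) ^ p₀.1 * Complex.exp ((p₀.2 : ℂ) * Complex.log q * (k : ℂ)) ≠ 0 :=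
    mul_ne_zero (pow_ne_zero _ hk0) (Complex.exp_ne_zero _)
  rw [A0term, mul_assoc, mul_div_assoc, div_self hX, mul_one]

private lemma A0term_zero (q : ℂ) (hq : q ≠ 0) (hq1 : ‖q‖ < 1) (c : ℕ × ℤ → ℂ)
    (p p₀ : ℕ × ℤ) (hlt : p₀.2 < p.2 ∨ (p.2 = p₀.2 ∧ p.1 < p₀.1)) :
    Tendsto (A0term q c p p₀) atTop (𝓝 0) := by
  have hle : p₀.2 ≤ p.2 := by rcases hlt with h | ⟨h, _⟩ <;> omega
  set Δ : ℕ := (p.2 - p₀.2).toNat with hΔdef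
  have hΔ : (Δ : ℤ) = p.2 - p₀.2 := Int.toNat_of_nonneg (by omega)
  -- rewrite of the term
  have key : ∀ᶠ k : ℕ in atTop,
      A0term q c p p₀ k = c p * ((k : ℂ) ^ p.1 / (k : ℂ) ^ p₀.1) * (q ^ Δ) ^ k := by
    filter_upwards [eventually_ge_atTop 1] with k hk
    have hk0 : (k : ℂ) ≠ 0 := Nat.cast_ne_zero.2 (by omega)
    have hB : (k : ℂ) ^ p₀.1 ≠ 0 := pow_ne_zero _ hk0
    have hQ : q ^ (p₀.2 * (k : ℤ)) ≠ 0 := zpow_ne_zero _ hq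
    have hsplit : q ^ (p.2 * (k : ℤ)) = q ^ (p₀.2 * (k : ℤ)) * (q ^ Δ) ^ k := by
      rw [← pow_mul, ← zpow_natCast q (Δ * k), ← zpow_add₀ hq]
      congr 1
      push_cast
      linear_combination (-(k : ℤ)) * hΔ
    rw [A0term, A0_exp_eq q hq, A0_exp_eq q hq, hsplit]
    field_simp
  rw [tendsto_congr' key, tendsto_zero_iff_norm_tendsto_zero]
  by_cases hc : p.2 = p₀.2
  · -- Δ = 0, polynomial degree drop
    have hΔ0 : Δ = 0 := by omega
    have hm : p.1 < p₀.1 := by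
      rcases hlt with h | ⟨_, h⟩
      · omega
      · exact h
    apply squeeze_zero' (Eventually.of_forall fun _ => norm_nonneg _)
      (g := fun k : ℕ => ‖c p‖ * ((k : ℝ))⁻¹)
    · filter_upwards [eventually_ge_atTop 1] with k hk
      have hk1 : (1 : ℝ) ≤ (k : ℝ) := by exact_mod_cast hk
      have hkpos : (0 : ℝ) < (k : ℝ) := by linarith
      simp only [hΔ0, pow_zero, one_pow, mul_one, norm_mul, norm_div, norm_pow,
        Complex.norm_natCast]
      have h2 : (k : ℝ) ^ p.1 / (k : ℝ) ^ p₀.1 ≤ (k : ℝ)⁻¹ := by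
        rw [div_le_iff₀ (pow_pos hkpos _), inv_mul_eq_div, le_div_iff₀ hkpos, mul_comm,
          ← pow_succ']
        exact pow_le_pow_right₀ hk1 (by omega)
      calc ‖c p‖ * ((k : ℝ) ^ p.1 / (k : ℝ) ^ p₀.1) ≤ ‖c p‖ * (k : ℝ)⁻¹ := by
            gcongr
        _ = ‖c p‖ * (k : ℝ)⁻¹ := rfl
    · have : Tendsto (fun k : ℕ => ((k : ℝ))⁻¹) atTop (𝓝 0) :=
        tendsto_inv_atTop_zero.comp tendsto_natCast_atTop_atTop
      simpa using this.const_mul ‖c p‖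
  · -- Δ ≥ 1, geometric decay
    have hΔ1 : 1 ≤ Δ := by omega
    have hρ0 : (0 : ℝ) ≤ ‖q‖ ^ Δ := pow_nonneg (norm_nonneg q) _
    have hρ1 : ‖q‖ ^ Δ < 1 := pow_lt_one₀ (norm_nonneg q) hq1 (by omega)
    apply squeeze_zero' (Eventually.of_forall fun _ => norm_nonneg _)
      (g := fun k : ℕ => ‖c p‖ * ((k : ℝ) ^ p.1 * (‖q‖ ^ Δ) ^ k))
    · filter_upwards [eventually_ge_atTop 1] with k hk
      have hk1 : (1 : ℝ) ≤ (k : ℝ) := by exact_mod_cast hk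
      simp only [norm_mul, norm_div, norm_pow, Complex.norm_natCast]
      rw [← mul_assoc]
      gcongr
      exact div_le_self (pow_nonneg (by linarith) _) (one_le_pow₀ hk1)
    · have := tendsto_pow_const_mul_const_pow_of_lt_one p.1 hρ0 hρ1
      simpa using this.const_mul ‖c p‖

private lemma A0_aux (q : ℂ) (hq : q ≠ 0) (hq1 : ‖q‖ < 1) :
    ∀ s : Finset (ℕ × ℤ), ∀ c : ℕ × ℤ → ℂ, ∀ K : ℤ,
      (∀ k : ℤ, K ≤ k →
        ∑ p ∈ s, c p * ((k : ℤ) : ℂ) ^ p.1 *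
          Complex.exp ((p.2 : ℂ) * Complex.log q * ((k : ℤ) : ℂ)) = 0) →
      ∀ p ∈ s, c p = 0 := by
  intro s
  induction s using Finset.strongInduction with
  | _ s ih =>
    intro c K hz p hp
    have hs : s.Nonempty := ⟨p, hp⟩
    -- pick the dominant index p₀ : minimal n, then maximal m
    obtain ⟨b, hbmem, hbmin⟩ := Finset.exists_min_image s Prod.snd hs
    obtain ⟨p₀, hp₀t, hp₀max⟩ :=
      Finset.exists_max_image (s.filter fun r => r.2 = b.2) Prod.fst
        ⟨b, Finset.mem_filter.2 ⟨hbmem, rfl⟩⟩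
    obtain ⟨hp₀mem, hp₀2⟩ := Finset.mem_filter.mp hp₀t
    -- the normalized sum
    set S : ℕ → ℂ := fun k => ∑ r ∈ s, A0term q c r p₀ k with hSdef
    have hS : Tendsto S atTop (𝓝 (c p₀)) := by
      have h1 : ∀ r ∈ s,
          Tendsto (A0term q c r p₀) atTop (𝓝 (if r = p₀ then c p₀ else 0)) := by
        intro r hr
        by_cases hrp : r = p₀
        · subst hrp; simpa using A0term_self q c r
        · rw [if_neg hrp]
          apply A0term_zero q hq hq1 c r p₀
          have h2 : p₀.2 ≤ r.2 := hp₀2 ▸ hbmin r hr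
          rcases lt_or_eq_of_le h2 with h | h
          · exact Or.inl h
          · refine Or.inr ⟨h.symm, ?_⟩
            have h3 : r.1 ≤ p₀.1 :=
              hp₀max r (Finset.mem_filter.2 ⟨hr, by rw [← h, hp₀2]⟩)
            rcases lt_or_eq_of_le h3 with h4 | h4
            · exact h4
            · exact absurd (Prod.ext h4 h.symm) hrp
      have h5 := tendsto_finset_sum s h1
      simpa [Finset.sum_ite_eq' s p₀, hp₀mem] using h5
    have hS0 : ∀ᶠ k : ℕ in atTop, S k = 0 := by
      filter_upwards [eventually_ge_atTop K.toNat] with k hk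
      have hKk : K ≤ (k : ℤ) := le_trans (Int.self_le_toNat K) (by exact_mod_cast hk)
      have h := hz (k : ℤ) hKk
      push_cast at h
      simp only [hSdef, A0term, ← Finset.sum_div]
      rw [h, zero_div]
    have hS0' : Tendsto S atTop (𝓝 0) :=
      Tendsto.congr' (EventuallyEq.symm hS0) tendsto_const_nhds
    have hcp₀ : c p₀ = 0 := tendsto_nhds_unique hS hS0'
    by_cases hpp : p = p₀
    · rw [hpp]; exact hcp₀
    · refine ih (s.erase p₀) (Finset.erase_ssubset hp₀mem) c K ?_ p
        (Finset.mem_erase.2 ⟨hpp, hp⟩)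
      intro k hk
      have h := hz k hk
      rw [← Finset.sum_erase_add s _ hp₀mem] at h
      simpa [hcp₀] using h


/-- `f` belongs to the algebra `A₀` of entire functions spanned by
`w ↦ w^m * q^(n*w)` for `m ∈ ℕ`, `n ∈ ℤ`, where `q^w = exp (w * Log q)`
with the principal branch of the logarithm. -/
def IsA0 (q : ℂ) (f : ℂ → ℂ) : Prop :=
  ∃ (s : Finset (ℕ × ℤ)) (c : ℕ × ℤ → ℂ),
    ∀ w : ℂ, f w = ∑ p ∈ s, c p * w ^ p.1 * Complex.exp ((p.2 : ℂ) * Complex.log q * w)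

/-- Interpolation property of `A₀`-functions: if `f ∈ A₀` vanishes at all
sufficiently large integers, then `f` vanishes identically. -/
theorem A0_interpolation (q : ℂ) (hq0 : 0 < ‖q‖) (hq1 : ‖q‖ < 1)
    (f : ℂ → ℂ) (hf : IsA0 q f)
    (K : ℤ) (hK : ∀ k : ℤ, K ≤ k → f (k : ℂ) = 0) :
    ∀ w : ℂ, f w = 0 := by
  obtain ⟨s, c, hrepr⟩ := hf
  have hq : q ≠ 0 := by
    intro h; rw [h] at hq0; simp at hq0
  have hq1' : ‖q‖ < 1 := by exact hq1
  have hall := A0_aux q hq hq1' s c K (fun k hk => by rw [← hrepr]; exact hK k hk)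
  intro w
  rw [hrepr]
  exact Finset.sum_eq_zero fun r hr => by rw [hall r hr]; ring
end

section
/- For every f ∈ A₀ and every integer l there exists a unique A₀-function F̃ such that F̃(n) = Σ_{i=0}^{n-1} f(i) q^{il} for every positive integer n. (Proposition 3.2: interpolation of partial sums.) -/
open Complex Finset Filter Polynomial Topology

namespace A0Aux

variable {q : ℂ}

lemma isA0_basis (m : ℕ) (n : ℤ) :
    IsA0 q (fun w => w ^ m * Complex.exp ((n : ℂ) * Complex.log q * w)) := by
  refine ⟨{(m, n)}, fun _ => 1, fun w => ?_⟩
  simp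

lemma isA0_const (a : ℂ) : IsA0 q (fun _ => a) := by
  refine ⟨{(0, 0)}, fun _ => a, fun w => ?_⟩
  simp

lemma isA0_smul {f : ℂ → ℂ} (hf : IsA0 q f) (a : ℂ) : IsA0 q (fun w => a * f w) := by
  obtain ⟨s, c, hc⟩ := hf
  refine ⟨s, fun p => a * c p, fun w => ?_⟩
  dsimp only
  rw [hc w, Finset.mul_sum]
  exact Finset.sum_congr rfl fun p _ => by ring

lemma isA0_add {f g : ℂ → ℂ} (hf : IsA0 q f) (hg : IsA0 q g) :
    IsA0 q (fun w => f w + g w) := by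
  classical
  obtain ⟨s1, c1, h1⟩ := hf
  obtain ⟨s2, c2, h2⟩ := hg
  refine ⟨s1 ∪ s2, fun p => (if p ∈ s1 then c1 p else 0) + (if p ∈ s2 then c2 p else 0),
    fun w => ?_⟩
  have key : ∀ (s' : Finset (ℕ × ℤ)) (c : ℕ × ℤ → ℂ), s' ⊆ s1 ∪ s2 →
      (∑ p ∈ s1 ∪ s2, (if p ∈ s' then c p else 0) * w ^ p.1 *
        Complex.exp ((p.2 : ℂ) * Complex.log q * w))
      = ∑ p ∈ s', c p * w ^ p.1 * Complex.exp ((p.2 : ℂ) * Complex.log q * w) := by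
    intro s' c hsub
    rw [← Finset.sum_subset hsub (fun p _ hp => by simp [hp])]
    exact Finset.sum_congr rfl fun p hp => by simp [hp]
  dsimp only
  rw [h1 w, h2 w]
  simp only [add_mul]
  rw [Finset.sum_add_distrib, key s1 c1 Finset.subset_union_left,
    key s2 c2 Finset.subset_union_right]

lemma isA0_sub {f g : ℂ → ℂ} (hf : IsA0 q f) (hg : IsA0 q g) :
    IsA0 q (fun w => f w - g w) := by
  have := isA0_add hf (isA0_smul hg (-1))
  simpa [sub_eq_add_neg] using this

lemma isA0_sum {ι : Type*} (s : Finset ι) (f : ι → ℂ → ℂ) (h : ∀ i ∈ s, IsA0 q (f i)) :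
    IsA0 q (fun w => ∑ i ∈ s, f i w) := by
  classical
  induction s using Finset.induction_on with
  | empty => simpa using isA0_const (q := q) 0
  | insert a s' hnotmem ih =>
    simp only [Finset.sum_insert hnotmem]
    exact isA0_add (h a (Finset.mem_insert_self a s'))
      (ih fun i hi => h i (Finset.mem_insert_of_mem hi))

lemma exp_coe (hq : q ≠ 0) (k : ℤ) (n : ℕ) :
    Complex.exp ((k : ℂ) * Complex.log q * (n : ℂ)) = q ^ (k * (n : ℤ)) := by
  have h : ((k : ℂ) * Complex.log q * (n : ℂ)) = ((k * (n : ℤ) : ℤ) : ℂ) * Complex.log q := by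
    push_cast; ring
  rw [h, Complex.exp_int_mul, Complex.exp_log hq]


lemma binom (w : ℂ) (M : ℕ) :
    (w + 1) ^ M = ∑ j ∈ Finset.range (M + 1), ((M.choose j : ℕ) : ℂ) * w ^ j := by
  rw [add_pow]
  exact Finset.sum_congr rfl fun j _ => by rw [one_pow]; ring

lemma exists_antidiff (hq : q ≠ 0) (hq0 : 0 < ‖q‖) (hq1 : ‖q‖ < 1)
    (k : ℤ) (m : ℕ) :
    ∃ F : ℂ → ℂ, IsA0 q F ∧
      ∀ w : ℂ, F (w + 1) - F w = w ^ m * Complex.exp ((k : ℂ) * Complex.log q * w) := by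
  induction m using Nat.strong_induction_on with
  | _ m ih =>
  choose G hGA hGd using ih
  by_cases hk : k = 0
  · subst hk
    simp only [Int.cast_zero, zero_mul, Complex.exp_zero, mul_one] at hGd ⊢
    refine ⟨fun w => ((m : ℂ) + 1)⁻¹ *
      (w ^ (m + 1) - ∑ j : Fin m, (((m + 1).choose (j : ℕ) : ℕ) : ℂ) * G (j : ℕ) j.2 w),
      ?_, ?_⟩
    · refine isA0_smul (isA0_sub ?_ ?_) _
      · simpa using isA0_basis (q := q) (m + 1) 0
      · exact isA0_sum _ _ fun j _ => isA0_smul (hGA (j : ℕ) j.2) _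
    · intro w
      dsimp only
      have hm : ((m : ℂ) + 1) ≠ 0 := Nat.cast_add_one_ne_zero m
      have hS : (∑ j : Fin m, (((m + 1).choose (j : ℕ) : ℕ) : ℂ) * G (j : ℕ) j.2 (w + 1))
          = (∑ j : Fin m, (((m + 1).choose (j : ℕ) : ℕ) : ℂ) * G (j : ℕ) j.2 w)
            + ∑ j : Fin m, (((m + 1).choose (j : ℕ) : ℕ) : ℂ) * w ^ (j : ℕ) := by
        rw [← Finset.sum_add_distrib]
        refine Finset.sum_congr rfl fun j _ => ?_
        linear_combination (((m + 1).choose (j : ℕ) : ℕ) : ℂ) * hGd (j : ℕ) j.2 w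
      have hb : (w + 1) ^ (m + 1)
          = (∑ j : Fin m, (((m + 1).choose (j : ℕ) : ℕ) : ℂ) * w ^ (j : ℕ))
            + ((m : ℂ) + 1) * w ^ m + w ^ (m + 1) := by
        rw [binom w (m + 1), Finset.sum_range_succ, Finset.sum_range_succ,
          ← Fin.sum_univ_eq_sum_range (fun j => (((m + 1).choose j : ℕ) : ℂ) * w ^ j) m]
        simp [Nat.choose_succ_self_right]
      rw [hS, hb]
      field_simp
      ring
  · set x := Complex.exp ((k : ℂ) * Complex.log q) with hxdef
    have hxq : x = q ^ k := by rw [hxdef, Complex.exp_int_mul, Complex.exp_log hq]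
    have hx1 : x ≠ 1 := by
      intro h
      have habs : ‖q‖ ^ k = 1 := by
        rw [← norm_zpow, ← hxq, h, norm_one]
      rcases lt_trichotomy k 0 with hneg | h0 | hpos
      · have h1 : ‖q‖ ^ (-k) < 1 := zpow_lt_one₀ hq0 hq1 (by omega)
        have h2 : (1 : ℝ) < (‖q‖ ^ (-k))⁻¹ :=
          (one_lt_inv₀ (zpow_pos hq0 _)).mpr h1
        rw [← zpow_neg, neg_neg, habs] at h2
        exact lt_irrefl _ h2
      · exact hk h0
      · exact absurd habs (ne_of_lt (zpow_lt_one₀ hq0 hq1 hpos))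
    have hx : x - 1 ≠ 0 := sub_ne_zero.2 hx1
    refine ⟨fun w => (x - 1)⁻¹ *
      (w ^ m * Complex.exp ((k : ℂ) * Complex.log q * w)
        - x * ∑ j : Fin m, ((m.choose (j : ℕ) : ℕ) : ℂ) * G (j : ℕ) j.2 w), ?_, ?_⟩
    · refine isA0_smul (isA0_sub (isA0_basis m k) (isA0_smul ?_ x)) _
      exact isA0_sum _ _ fun j _ => isA0_smul (hGA (j : ℕ) j.2) _
    · intro w
      dsimp only
      have hE : Complex.exp ((k : ℂ) * Complex.log q * (w + 1))
          = Complex.exp ((k : ℂ) * Complex.log q * w) * x := by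
        rw [hxdef, mul_add, mul_one, Complex.exp_add]
      have hS : (∑ j : Fin m, ((m.choose (j : ℕ) : ℕ) : ℂ) * G (j : ℕ) j.2 (w + 1))
          = (∑ j : Fin m, ((m.choose (j : ℕ) : ℕ) : ℂ) * G (j : ℕ) j.2 w)
            + (∑ j : Fin m, ((m.choose (j : ℕ) : ℕ) : ℂ) * w ^ (j : ℕ))
              * Complex.exp ((k : ℂ) * Complex.log q * w) := by
        rw [Finset.sum_mul, ← Finset.sum_add_distrib]
        refine Finset.sum_congr rfl fun j _ => ?_
        linear_combination ((m.choose (j : ℕ) : ℕ) : ℂ) * hGd (j : ℕ) j.2 w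
      have hb : (w + 1) ^ m
          = (∑ j : Fin m, ((m.choose (j : ℕ) : ℕ) : ℂ) * w ^ (j : ℕ)) + w ^ m := by
        rw [binom w m, Finset.sum_range_succ,
          ← Fin.sum_univ_eq_sum_range (fun j => ((m.choose j : ℕ) : ℂ) * w ^ j) m]
        simp
      rw [hE, hS, hb]
      field_simp
      ring

lemma poly_tendsto_zero_aux :
    ∀ (d : ℕ) (P : Polynomial ℂ), P.natDegree ≤ d →
      Tendsto (fun n : ℕ => P.eval (n : ℂ)) atTop (𝓝 0) → P = 0 := by
  intro d
  induction d with
  | zero =>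
    intro P hdeg h
    obtain ⟨a, rfl⟩ : ∃ a, P = Polynomial.C a :=
      ⟨P.coeff 0, (Polynomial.eq_C_of_natDegree_le_zero hdeg)⟩
    have h' : Tendsto (fun _ : ℕ => a) atTop (𝓝 0) := by simpa using h
    have : a = 0 := (tendsto_nhds_unique tendsto_const_nhds h')
    simp [this]
  | succ d ihd =>
    intro P hdeg h
    by_cases h0 : P.natDegree = 0
    · exact ihd P (by omega) h
    have hPne : P ≠ 0 := fun hP => h0 (by simp [hP])
    set Q := P.comp (X + Polynomial.C 1) - P with hQdef
    have hXC : (X + Polynomial.C (1 : ℂ)).natDegree = 1 := by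
      simpa using Polynomial.natDegree_X_add_C (1 : ℂ)
    have hcompne : P.comp (X + Polynomial.C 1) ≠ 0 := by
      intro hzero
      have := Polynomial.natDegree_comp (p := P) (q := X + Polynomial.C (1 : ℂ))
      rw [hzero, hXC, mul_one] at this
      exact h0 (by simpa using this.symm)
    have hQdeg : Q.natDegree ≤ d := by
      by_cases hQ : Q = 0
      · simp [hQ]
      have hdlt : Q.degree < P.degree := by
        have hnatcomp : (P.comp (X + Polynomial.C 1)).natDegree = P.natDegree := by
          rw [Polynomial.natDegree_comp, hXC, mul_one]
        have heq : (P.comp (X + Polynomial.C 1)).degree = P.degree := by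
          rw [Polynomial.degree_eq_natDegree hcompne, Polynomial.degree_eq_natDegree hPne,
            hnatcomp]
        have hlc : (P.comp (X + Polynomial.C 1)).leadingCoeff = P.leadingCoeff := by
          have hXC1 : (X + Polynomial.C (1 : ℂ)).leadingCoeff = 1 :=
            Polynomial.monic_X_add_C 1
          rw [Polynomial.leadingCoeff_comp (by rw [hXC]; norm_num), hXC1, one_pow, mul_one]
        have := Polynomial.degree_sub_lt heq hcompne hlc
        rwa [heq] at this
      have := Polynomial.natDegree_lt_natDegree hQ hdlt
      omega
    have hQt : Tendsto (fun n : ℕ => Q.eval (n : ℂ)) atTop (𝓝 0) := by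
      have h1 : Tendsto (fun n : ℕ => P.eval ((n : ℂ) + 1)) atTop (𝓝 0) := by
        have := h.comp (tendsto_add_atTop_nat 1)
        refine this.congr fun n => ?_
        simp [Function.comp]
      have := h1.sub h
      simpa [hQdef, Polynomial.eval_comp] using this
    have hQ0 : Q = 0 := ihd Q hQdeg hQt
    have hcomp : P.comp (X + Polynomial.C 1) = P := by
      have := sub_eq_zero.mp hQ0
      exact this
    have hshift : ∀ z : ℂ, P.eval (z + 1) = P.eval z := by
      intro z
      calc P.eval (z + 1) = (P.comp (X + Polynomial.C 1)).eval z := by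
            simp [Polynomial.eval_comp]
        _ = P.eval z := by rw [hcomp]
    have hconst : ∀ n : ℕ, P.eval (n : ℂ) = P.eval 0 := by
      intro n
      induction n with
      | zero => simp
      | succ n ih2 => rw [Nat.cast_succ, hshift, ih2]
    have h00 : P.eval 0 = 0 := by
      have h' : Tendsto (fun _ : ℕ => P.eval 0) atTop (𝓝 0) := h.congr hconst
      exact tendsto_nhds_unique tendsto_const_nhds h'
    apply Polynomial.eq_zero_of_infinite_isRoot
    apply Set.infinite_of_injective_forall_mem (f := fun n : ℕ => (n : ℂ)) Nat.cast_injective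
    intro n
    simp only [Set.mem_setOf_eq, Polynomial.IsRoot]
    rw [hconst n, h00]

lemma poly_tendsto_zero (P : Polynomial ℂ)
    (h : Tendsto (fun n : ℕ => P.eval (n : ℂ)) atTop (𝓝 0)) : P = 0 :=
  poly_tendsto_zero_aux P.natDegree P le_rfl h

lemma poly_mul_geom_tendsto (P : Polynomial ℂ) (r : ℂ) (hr : ‖r‖ < 1) :
    Tendsto (fun n : ℕ => P.eval (n : ℂ) * r ^ n) atTop (𝓝 0) := by
  have hterm : ∀ n : ℕ, P.eval (n : ℂ) * r ^ n
      = ∑ i ∈ Finset.range (P.natDegree + 1), P.coeff i * ((n : ℂ) ^ i * r ^ n) := by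
    intro n
    rw [Polynomial.eval_eq_sum_range, Finset.sum_mul]
    exact Finset.sum_congr rfl fun i _ => by ring
  have h0 : Tendsto (fun n : ℕ =>
      ∑ i ∈ Finset.range (P.natDegree + 1), P.coeff i * ((n : ℂ) ^ i * r ^ n))
      atTop (𝓝 0) := by
    rw [show (0 : ℂ) = ∑ i ∈ Finset.range (P.natDegree + 1), P.coeff i * 0 by simp]
    refine tendsto_finset_sum _ fun i _ => Tendsto.const_mul _ ?_
    exact ((summable_norm_pow_mul_geometric_of_norm_lt_one i hr).of_norm).tendsto_atTop_zero
  exact h0.congr fun n => (hterm n).symm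

lemma vanish (hq : q ≠ 0) (hq0 : 0 < ‖q‖) (hq1 : ‖q‖ < 1)
    (P : ℤ → Polynomial ℂ) :
    ∀ t : Finset ℤ,
      (∀ n : ℕ, 0 < n → ∑ j ∈ t, (P j).eval (n : ℂ) * (q ^ j) ^ n = 0) →
      ∀ k ∈ t, P k = 0 := by
  intro t
  induction t using Finset.strongInduction with
  | _ t ih =>
  intro h k hk
  have hne : t.Nonempty := ⟨k, hk⟩
  set k0 := t.min' hne with hk0def
  have hk0mem : k0 ∈ t := t.min'_mem hne
  have key : ∀ n : ℕ, 0 < n →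
      (P k0).eval (n : ℂ) = - ∑ j ∈ t.erase k0, (P j).eval (n : ℂ) * (q ^ (j - k0)) ^ n := by
    intro n hn
    have h1 := h n hn
    rw [← Finset.add_sum_erase t _ hk0mem] at h1
    have hqk : ((q ^ k0 : ℂ)) ^ n ≠ 0 := pow_ne_zero _ (zpow_ne_zero _ hq)
    refine mul_right_cancel₀ hqk ?_
    rw [neg_mul, Finset.sum_mul]
    have hterm : ∀ j ∈ t.erase k0,
        ((P j).eval (n : ℂ) * (q ^ (j - k0)) ^ n) * (q ^ k0) ^ n
          = (P j).eval (n : ℂ) * (q ^ j) ^ n := by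
      intro j _
      rw [mul_assoc, ← mul_pow, ← zpow_add₀ hq, sub_add_cancel]
    rw [Finset.sum_congr rfl hterm]
    linear_combination h1
  have htend : Tendsto (fun n : ℕ => (P k0).eval (n : ℂ)) atTop (𝓝 0) := by
    have h2 : Tendsto (fun n : ℕ =>
        - ∑ j ∈ t.erase k0, (P j).eval (n : ℂ) * (q ^ (j - k0)) ^ n) atTop (𝓝 0) := by
      rw [show (0 : ℂ) = - ∑ j ∈ t.erase k0, (0 : ℂ) by simp]
      refine Tendsto.neg (tendsto_finset_sum _ fun j hj => ?_)
      refine poly_mul_geom_tendsto _ _ ?_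
      have hj0 : k0 < j :=
        lt_of_le_of_ne (t.min'_le j (Finset.mem_of_mem_erase hj))
          (Ne.symm (Finset.ne_of_mem_erase hj))
      rw [norm_zpow]
      exact zpow_lt_one₀ hq0 hq1 (by omega)
    exact h2.congr' (by filter_upwards [eventually_gt_atTop 0] with n hn using (key n hn).symm)
  have hPk0 : P k0 = 0 := poly_tendsto_zero _ htend
  have h' : ∀ n : ℕ, 0 < n → ∑ j ∈ t.erase k0, (P j).eval (n : ℂ) * (q ^ j) ^ n = 0 := by
    intro n hn
    have h1 := h n hn
    rw [← Finset.add_sum_erase t _ hk0mem, hPk0] at h1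
    simpa using h1
  by_cases hkk : k = k0
  · rw [hkk]; exact hPk0
  · exact ih (t.erase k0) (Finset.erase_ssubset hk0mem) h' k (Finset.mem_erase.2 ⟨hkk, hk⟩)


lemma telescope (F g : ℂ → ℂ) (hd : ∀ w : ℂ, F (w + 1) - F w = g w) (n : ℕ) :
    F (n : ℂ) - F 0 = ∑ i ∈ Finset.range n, g (i : ℂ) := by
  induction n with
  | zero => simp
  | succ n ih =>
    rw [Finset.sum_range_succ, ← ih, Nat.cast_succ]
    linear_combination hd (n : ℂ)

/-- uniqueness core -/
lemma eq_of_agree (hq : q ≠ 0) (hq0 : 0 < ‖q‖) (hq1 : ‖q‖ < 1)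
    {F G : ℂ → ℂ} (hF : IsA0 q F) (hG : IsA0 q G)
    (h : ∀ n : ℕ, 0 < n → G (n : ℂ) = F (n : ℂ)) : G = F := by
  classical
  obtain ⟨s, c, hc⟩ := isA0_sub hG hF
  set t : Finset ℤ := s.image Prod.snd with ht
  set P : ℤ → Polynomial ℂ := fun k =>
    ∑ p ∈ s.filter (fun p => p.2 = k), Polynomial.C (c p) * Polynomial.X ^ p.1 with hP
  have hrep : ∀ w : ℂ, G w - F w
      = ∑ k ∈ t, (P k).eval w * Complex.exp ((k : ℂ) * Complex.log q * w) := by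
    intro w
    have := hc w
    dsimp only at this
    rw [this, ← Finset.sum_fiberwise_of_maps_to
      (fun p hp => Finset.mem_image_of_mem Prod.snd hp)
      (fun p => c p * w ^ p.1 * Complex.exp ((p.2 : ℂ) * Complex.log q * w))]
    refine Finset.sum_congr rfl fun k hk => ?_
    rw [hP]
    simp only [Polynomial.eval_finset_sum, Polynomial.eval_mul, Polynomial.eval_C,
      Polynomial.eval_pow, Polynomial.eval_X, Finset.sum_mul]
    refine Finset.sum_congr rfl fun p hp => ?_
    have hp2 : p.2 = k := (Finset.mem_filter.1 hp).2
    rw [hp2]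
  have hval : ∀ n : ℕ, 0 < n → ∑ k ∈ t, (P k).eval (n : ℂ) * ((q ^ k : ℂ)) ^ n = 0 := by
    intro n hn
    have h1 := hrep (n : ℂ)
    rw [h n hn, sub_self] at h1
    have hexp : ∀ k : ℤ, ((q ^ k : ℂ)) ^ n = Complex.exp ((k : ℂ) * Complex.log q * (n : ℂ)) := by
      intro k
      rw [exp_coe hq k n, zpow_mul, zpow_natCast]
    rw [Finset.sum_congr rfl fun k _ => by rw [hexp k]]
    exact h1.symm
  have hP0 : ∀ k ∈ t, P k = 0 := vanish hq hq0 hq1 P t hval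
  funext w
  have h1 := hrep w
  rw [Finset.sum_congr rfl (fun k hk => by rw [hP0 k hk]; simp : ∀ k ∈ t,
    (P k).eval w * Complex.exp ((k : ℂ) * Complex.log q * w) = 0),
    Finset.sum_const_zero] at h1
  exact sub_eq_zero.mp h1

end A0Aux

open A0Aux in
/-- Proposition 3.2: for every `f ∈ A₀` and every integer `l` there exists a unique
`A₀`-function `F` interpolating the partial sums `n ↦ ∑_{i=0}^{n-1} f(i) q^(i*l)`. -/
theorem A0_sum_interpolation (q : ℂ) (hq0 : 0 < ‖q‖) (hq1 : ‖q‖ < 1)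
    (f : ℂ → ℂ) (hf : IsA0 q f) (l : ℤ) :
    ∃ F : ℂ → ℂ, IsA0 q F ∧
      (∀ n : ℕ, 0 < n → F (n : ℂ) = ∑ i ∈ Finset.range n, f (i : ℂ) * q ^ ((i : ℤ) * l)) ∧
      ∀ G : ℂ → ℂ, IsA0 q G →
        (∀ n : ℕ, 0 < n → G (n : ℂ) = ∑ i ∈ Finset.range n, f (i : ℂ) * q ^ ((i : ℤ) * l)) →
        G = F := by
  have hq : q ≠ 0 := by
    intro h; rw [h] at hq0; simp at hq0
  obtain ⟨s, c, hfc⟩ := hf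
  choose F hFA hFd using fun p : ℕ × ℤ => exists_antidiff hq hq0 hq1 (p.2 + l) p.1
  have hA : IsA0 q (fun w => ∑ p ∈ s, c p * (F p w - F p 0)) :=
    isA0_sum _ _ fun p _ => isA0_smul (isA0_sub (hFA p) (isA0_const (F p 0))) (c p)
  have hterm : ∀ (p : ℕ × ℤ) (i : ℕ),
      c p * ((i : ℂ) ^ p.1 * Complex.exp (((p.2 + l : ℤ) : ℂ) * Complex.log q * (i : ℂ)))
        = (c p * (i : ℂ) ^ p.1 * Complex.exp ((p.2 : ℂ) * Complex.log q * (i : ℂ)))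
            * q ^ ((i : ℤ) * l) := by
    intro p i
    rw [exp_coe hq, exp_coe hq,
      show (p.2 + l) * (i : ℤ) = p.2 * (i : ℤ) + (i : ℤ) * l by ring, zpow_add₀ hq]
    ring
  have hval : ∀ n : ℕ, 0 < n →
      ∑ p ∈ s, c p * (F p (n : ℂ) - F p 0)
        = ∑ i ∈ Finset.range n, f (i : ℂ) * q ^ ((i : ℤ) * l) := by
    intro n _
    have hFn : ∀ p : ℕ × ℤ, F p (n : ℂ) - F p 0
        = ∑ i ∈ Finset.range n, (i : ℂ) ^ p.1
            * Complex.exp (((p.2 + l : ℤ) : ℂ) * Complex.log q * (i : ℂ)) := fun p =>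
      telescope (F p) _ (hFd p) n
    calc ∑ p ∈ s, c p * (F p (n : ℂ) - F p 0)
        = ∑ p ∈ s, ∑ i ∈ Finset.range n,
            c p * ((i : ℂ) ^ p.1
              * Complex.exp (((p.2 + l : ℤ) : ℂ) * Complex.log q * (i : ℂ))) := by
          refine Finset.sum_congr rfl fun p _ => ?_
          rw [hFn p, Finset.mul_sum]
      _ = ∑ i ∈ Finset.range n, ∑ p ∈ s,
            c p * ((i : ℂ) ^ p.1
              * Complex.exp (((p.2 + l : ℤ) : ℂ) * Complex.log q * (i : ℂ))) :=
          Finset.sum_comm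
      _ = ∑ i ∈ Finset.range n, (∑ p ∈ s,
            c p * (i : ℂ) ^ p.1 * Complex.exp ((p.2 : ℂ) * Complex.log q * (i : ℂ)))
              * q ^ ((i : ℤ) * l) := by
          refine Finset.sum_congr rfl fun i _ => ?_
          rw [Finset.sum_mul]
          exact Finset.sum_congr rfl fun p _ => hterm p i
      _ = ∑ i ∈ Finset.range n, f (i : ℂ) * q ^ ((i : ℤ) * l) := by
          refine Finset.sum_congr rfl fun i _ => ?_
          rw [hfc (i : ℂ)]
  refine ⟨fun w => ∑ p ∈ s, c p * (F p w - F p 0), hA, fun n hn => hval n hn,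
    fun G hGA hGv => ?_⟩
  refine eq_of_agree hq hq0 hq1 hA hGA fun n hn => ?_
  rw [hGv n hn]
  exact (hval n hn).symm
end

section
/- Let f : ℂ × ℂ → ℂ be a function such that for every fixed t ∈ ℂ the function w ↦ f(w,t) belongs to A₀, and for every fixed w ∈ ℂ the function t ↦ f(w,t) belongs to A₀. Then f is an A₀-function of two variables, i.e. there exist finitely many g₁,…,g_N, h₁,…,h_N ∈ A₀ with f(w,t) = Σ_{i=1}^{N} g_i(w) h_i(t). (Proposition 3.3.) -/
/-- The basic functions spanning `A₀`. -/
noncomputable def A0fun (q : ℂ) (p : ℕ × ℤ) : ℂ → ℂ :=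
  fun w => w ^ p.1 * Complex.exp ((p.2 : ℂ) * Complex.log q * w)

lemma isA0_iff_mem_span (q : ℂ) (f : ℂ → ℂ) :
    IsA0 q f ↔ f ∈ Submodule.span ℂ (Set.range (A0fun q)) := by
  constructor
  · rintro ⟨s, c, hc⟩
    have hf : f = ∑ p ∈ s, c p • A0fun q p := by
      funext w
      simp [hc w, A0fun, mul_assoc]
    rw [hf]
    exact Submodule.sum_mem _ fun p _ =>
      Submodule.smul_mem _ _ (Submodule.subset_span ⟨p, rfl⟩)
  · intro hf
    rw [Finsupp.mem_span_range_iff_exists_finsupp] at hf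
    obtain ⟨c, hc⟩ := hf
    refine ⟨c.support, c, fun w => ?_⟩
    rw [← hc]
    simp [Finsupp.sum, A0fun, mul_assoc]

lemma isA0_finset_sum {q : ℂ} {ι : Type*} (s : Finset ι) (c : ι → ℂ) (F : ι → ℂ → ℂ)
    (hF : ∀ i ∈ s, IsA0 q (F i)) : IsA0 q (fun t => ∑ i ∈ s, c i * F i t) := by
  rw [isA0_iff_mem_span]
  have hs : (fun t => ∑ i ∈ s, c i * F i t) = ∑ i ∈ s, c i • F i := by
    funext t; simp
  rw [hs]
  exact Submodule.sum_mem _ fun i hi =>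
    Submodule.smul_mem _ _ ((isA0_iff_mem_span q _).1 (hF i hi))

lemma IsA0.differentiable {q : ℂ} {f : ℂ → ℂ} (hf : IsA0 q f) : Differentiable ℂ f := by
  obtain ⟨s, c, hc⟩ := hf
  have : f = fun w => ∑ p ∈ s, c p * w ^ p.1 * Complex.exp ((p.2 : ℂ) * Complex.log q * w) :=
    funext hc
  rw [this]
  refine Differentiable.fun_sum fun p _ => ?_
  exact ((differentiable_const _).mul (differentiable_pow _)).mul
    ((differentiable_id.const_mul _).cexp)

/-- Proposition 3.3: a function of two complex variables which is an `A₀`-function in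
each variable separately is an `A₀`-function of two variables, i.e. a finite sum
`∑ i, g i w * h i t` with `g i, h i ∈ A₀`. -/
theorem A0_two_variables (q : ℂ) (hq0 : 0 < ‖q‖) (hq1 : ‖q‖ < 1)
    (f : ℂ → ℂ → ℂ)
    (h1 : ∀ t : ℂ, IsA0 q (fun w => f w t))
    (h2 : ∀ w : ℂ, IsA0 q (fun t => f w t)) :
    ∃ (N : ℕ) (g h : Fin N → ℂ → ℂ),
      (∀ i, IsA0 q (g i)) ∧ (∀ i, IsA0 q (h i)) ∧
      ∀ w t : ℂ, f w t = ∑ i, g i w * h i t := by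
  classical
  set Φ : ℕ × ℤ → ℂ → ℂ := A0fun q with hΦ
  set T : Finset (ℕ × ℤ) → Set ℂ :=
    fun s => {t | (fun w => f w t) ∈ Submodule.span ℂ (Φ '' ↑s)} with hTdef
  -- every t belongs to some T s
  have hcover : ∀ t : ℂ, ∃ s, t ∈ T s := by
    intro t
    obtain ⟨s, c, hc⟩ := h1 t
    refine ⟨s, ?_⟩
    have hft : (fun w => f w t) = ∑ p ∈ s, c p • Φ p := by
      funext w
      simp [hc w, hΦ, A0fun, mul_assoc]
    show (fun w => f w t) ∈ Submodule.span ℂ (Φ '' ↑s)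
    rw [hft]
    exact Submodule.sum_mem _ fun p hp =>
      Submodule.smul_mem _ _ (Submodule.subset_span ⟨p, hp, rfl⟩)
  -- some T s is uncountable
  have huncount : ∃ s, ¬ (T s).Countable := by
    by_contra hcon
    push_neg at hcon
    have hU : Uncountable ℂ := Complex.ofReal_injective.uncountable
    have h1' : (Set.univ : Set ℂ) ⊆ ⋃ s, T s := fun t _ => Set.mem_iUnion.2 (hcover t)
    have h2' : (Set.univ : Set ℂ).Countable := (Set.countable_iUnion hcon).mono h1'
    rw [Set.countable_univ_iff] at h2'
    exact (not_countable_iff.mpr hU) h2'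
  obtain ⟨s, hs⟩ := huncount
  -- T s has an accumulation point
  have hacc : ∃ z : ℂ, AccPt z (Filter.principal (T s)) := by
    have hinf : ∃ n : ℕ, (T s ∩ Metric.closedBall 0 n).Infinite := by
      by_contra hcon
      push_neg at hcon
      apply hs
      have hsub : T s ⊆ ⋃ n : ℕ, T s ∩ Metric.closedBall 0 n := by
        intro t ht
        obtain ⟨n, hn⟩ := exists_nat_ge ‖t‖
        refine Set.mem_iUnion.2 ⟨n, ht, ?_⟩
        simpa [Complex.dist_eq] using hn
      exact (Set.countable_iUnion fun n => (hcon n).countable).mono hsub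
    obtain ⟨n, hn⟩ := hinf
    obtain ⟨z, _, hz⟩ := hn.exists_accPt_of_subset_isCompact
      (isCompact_closedBall (0 : ℂ) n) Set.inter_subset_right
    exact ⟨z, hz.mono (Filter.principal_mono.2 Set.inter_subset_left)⟩
  obtain ⟨z₀, hz₀⟩ := hacc
  -- the finite-dimensional space V
  set V : Submodule ℂ (ℂ → ℂ) := Submodule.span ℂ (Φ '' ↑s) with hVdef
  haveI hVfd : FiniteDimensional ℂ V :=
    FiniteDimensional.span_of_finite ℂ (s.finite_toSet.image Φ)
  set d := Module.finrank ℂ V with hd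
  set b : Module.Basis (Fin d) ℂ V := Module.finBasis ℂ V with hb
  -- evaluation functionals span the dual of V
  set E : ℂ → Module.Dual ℂ V := fun x => (LinearMap.proj x).comp V.subtype with hE
  have hEtop : Submodule.span ℂ (Set.range E) = ⊤ := by
    have hbot : (Submodule.span ℂ (Set.range E)).dualCoannihilator = ⊥ := by
      rw [eq_bot_iff]
      intro v hv
      rw [Submodule.mem_dualCoannihilator] at hv
      have hvz : ∀ x : ℂ, (v : ℂ → ℂ) x = 0 := fun x =>
        hv (E x) (Submodule.subset_span ⟨x, rfl⟩)
      have : v = 0 := Subtype.ext (funext hvz)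
      simpa [Submodule.mem_bot] using this
    have hW := Subspace.dualCoannihilator_dualAnnihilator_eq
      (W := Submodule.span ℂ (Set.range E))
    rw [hbot, Submodule.dualAnnihilator_bot] at hW
    exact hW.symm
  have hcoord : ∀ i : Fin d, ∃ a : ℂ →₀ ℂ,
      (a.sum fun x r => r • E x) = b.coord i := by
    intro i
    have hmem : b.coord i ∈ Submodule.span ℂ (Set.range E) := by
      rw [hEtop]; exact Submodule.mem_top
    rwa [Finsupp.mem_span_range_iff_exists_finsupp] at hmem
  choose a ha using hcoord
  -- the functions g and h
  refine ⟨d, fun i => ((b i : ℂ → ℂ)), fun i t => ∑ x ∈ (a i).support, a i x * f x t,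
    ?_, ?_, ?_⟩
  · intro i
    rw [isA0_iff_mem_span]
    exact Submodule.span_mono (Set.image_subset_range Φ ↑s) (b i).2
  · intro i
    exact isA0_finset_sum _ _ _ fun x _ => h2 x
  · -- the identity, first on T s, then everywhere by analytic continuation
    have key : ∀ t ∈ T s, ∀ w : ℂ,
        f w t = ∑ i, (b i : ℂ → ℂ) w * ∑ x ∈ (a i).support, a i x * f x t := by
      intro t ht w
      set v : V := ⟨fun w => f w t, ht⟩ with hv
      have hco : ∀ i : Fin d, (∑ x ∈ (a i).support, a i x * f x t) = b.repr v i := by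
        intro i
        have := congrArg (fun φ : Module.Dual ℂ V => φ v) (ha i)
        simp only [Finsupp.sum, LinearMap.coe_sum, Finset.sum_apply,
          LinearMap.smul_apply, Module.Basis.coord_apply] at this
        rw [← this]
        simp [hE, smul_eq_mul]
        rfl
      have hrepr : v = ∑ i, b.repr v i • b i := (b.sum_repr v).symm
      have hfun : (fun w => f w t) = ((∑ i, b.repr v i • b i : V) : ℂ → ℂ) := by
        rw [← hrepr]
      have := congrFun hfun w
      rw [this]
      push_cast [Submodule.coe_sum]
      rw [Finset.sum_apply]
      refine Finset.sum_congr rfl fun i _ => ?_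
      rw [hco i]
      simp [mul_comm]
    intro w t
    -- both sides are entire functions of t agreeing on T s
    set F1 : ℂ → ℂ := fun t => f w t with hF1
    set F2 : ℂ → ℂ := fun t =>
      ∑ i, (b i : ℂ → ℂ) w * ∑ x ∈ (a i).support, a i x * f x t with hF2
    have hF1A : IsA0 q F1 := h2 w
    have hF2A : IsA0 q F2 := by
      refine isA0_finset_sum Finset.univ (fun i => (b i : ℂ → ℂ) w)
        (fun i t => ∑ x ∈ (a i).support, a i x * f x t) fun i _ => ?_
      exact isA0_finset_sum _ _ _ fun x _ => h2 x
    have hA1 : AnalyticOnNhd ℂ F1 Set.univ :=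
      hF1A.differentiable.differentiableOn.analyticOnNhd isOpen_univ
    have hA2 : AnalyticOnNhd ℂ F2 Set.univ :=
      hF2A.differentiable.differentiableOn.analyticOnNhd isOpen_univ
    have hfreq : ∃ᶠ z in nhdsWithin z₀ {z₀}ᶜ, F1 z = F2 z := by
      have hf' : ∃ᶠ z in nhds z₀, z ≠ z₀ ∧ z ∈ T s :=
        (accPt_iff_frequently (x := z₀) (C := T s)).1 hz₀
      rw [frequently_nhdsWithin_iff]
      refine hf'.mono fun z hz => ?_
      exact ⟨key z hz.2 w, hz.1⟩
    have := hA1.eqOn_of_preconnected_of_frequently_eq hA2 isPreconnected_univ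
      (Set.mem_univ z₀) hfreq
    exact this (Set.mem_univ t)
end

section
/- Let g(w,t) = Σ_{i=1}^{N} g_i(w) h_i(t) be an A₀-function of two variables, let l be a positive integer, and suppose there is an integer K such that g(m−l, m) = 0 for every integer m > K. Then g(w−l, w) = 0 for every w ∈ ℂ. (Key step of Proposition 3.4: vanishing of the near-diagonal values A^{(n)}(w, w+l) = 0 for matrices in gl_q.) -/
open Polynomial

/-- The basic generators of the algebra `A₀`. -/
noncomputable def Bfun (q : ℂ) : ℕ × ℤ → ℂ → ℂ :=
  fun p w => w ^ p.1 * Complex.exp ((p.2 : ℂ) * Complex.log q * w)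

/-- The span of the generators. -/
noncomputable def A0span (q : ℂ) : Submodule ℂ (ℂ → ℂ) :=
  Submodule.span ℂ (Set.range (Bfun q))

lemma Bfun_mul (q : ℂ) (p r : ℕ × ℤ) : Bfun q p * Bfun q r = Bfun q (p + r) := by
  funext w
  simp only [Bfun, Pi.mul_apply, Prod.fst_add, Prod.snd_add]
  have h : (((p.2 + r.2 : ℤ)) : ℂ) * Complex.log q * w
      = (p.2 : ℂ) * Complex.log q * w + (r.2 : ℂ) * Complex.log q * w := by push_cast; ring
  rw [h, Complex.exp_add, pow_add]; ring

lemma A0span_mul_mem (q : ℂ) {f g : ℂ → ℂ} (hf : f ∈ A0span q) (hg : g ∈ A0span q) :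
    f * g ∈ A0span q := by
  have hle : A0span q * A0span q ≤ A0span q := by
    rw [A0span, Submodule.span_mul_span]
    refine Submodule.span_le.2 ?_
    rintro x ⟨a, ⟨p, rfl⟩, b, ⟨r, rfl⟩, rfl⟩
    exact Submodule.subset_span ⟨p + r, (Bfun_mul q p r).symm⟩
  exact hle (Submodule.mul_mem_mul hf hg)

lemma A0span_shift_mem (q a : ℂ) {f : ℂ → ℂ} (hf : f ∈ A0span q) :
    (fun w => f (w - a)) ∈ A0span q := by
  induction hf using Submodule.span_induction with
  | mem x hx =>
    obtain ⟨p, rfl⟩ := hx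
    have hrep : (fun w => Bfun q p (w - a))
        = ∑ j ∈ Finset.range (p.1 + 1),
            (((-a) ^ (p.1 - j) * (p.1.choose j : ℂ))
              * Complex.exp (-((p.2 : ℂ) * Complex.log q * a))) • Bfun q (j, p.2) := by
      funext w
      simp only [Finset.sum_apply, Pi.smul_apply, smul_eq_mul, Bfun]
      rw [sub_eq_add_neg w a, add_pow]
      have h2 : (p.2 : ℂ) * Complex.log q * (w + -a)
          = (p.2 : ℂ) * Complex.log q * w + -((p.2 : ℂ) * Complex.log q * a) := by ring
      rw [h2, Complex.exp_add, Finset.sum_mul]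
      refine Finset.sum_congr rfl fun j _ => ?_
      ring
    rw [hrep]
    exact Submodule.sum_mem _ fun j _ =>
      Submodule.smul_mem _ _ (Submodule.subset_span ⟨(j, p.2), rfl⟩)
  | zero => exact (A0span q).zero_mem
  | add x y hx hy ihx ihy =>
    have h : (fun w => (x + y) (w - a)) = (fun w => x (w - a)) + (fun w => y (w - a)) := rfl
    rw [h]; exact (A0span q).add_mem ihx ihy
  | smul c x hx ihx =>
    have h : (fun w => (c • x) (w - a)) = c • (fun w => x (w - a)) := rfl
    rw [h]; exact (A0span q).smul_mem c ihx

lemma mem_A0span_of_isA0 {q : ℂ} {f : ℂ → ℂ} (h : IsA0 q f) : f ∈ A0span q := by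
  obtain ⟨s, c, hc⟩ := h
  have hrep : f = ∑ p ∈ s, c p • Bfun q p := by
    funext w
    rw [hc w, Finset.sum_apply]
    refine Finset.sum_congr rfl fun p _ => ?_
    simp [Bfun, mul_assoc]
  rw [hrep]
  exact Submodule.sum_mem _ fun p _ =>
    Submodule.smul_mem _ _ (Submodule.subset_span ⟨p, rfl⟩)

/-- Key sequence lemma: an exponential polynomial (with distinct nonzero bases)
vanishing on all sufficiently large naturals has all polynomials zero. -/
lemma seq_key (lam : ℤ → ℂ) (hne : ∀ n, lam n ≠ 0) (hinj : Function.Injective lam) :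
    ∀ (M : ℕ) (t : Finset ℤ) (P : ℤ → ℂ[X]),
      (∑ n ∈ t, (P n).natDegree) + t.card ≤ M →
      ∀ K₀ : ℕ, (∀ k : ℕ, K₀ ≤ k → ∑ n ∈ t, (P n).eval (k : ℂ) * lam n ^ k = 0) →
      ∀ n ∈ t, P n = 0 := by
  intro M
  induction M with
  | zero =>
    intro t P hM K₀ ha n hn
    have hcard : t.card = 0 := Nat.le_zero.1 (le_trans (Nat.le_add_left _ _) hM)
    simp [Finset.card_eq_zero.1 hcard] at hn
  | succ M ih =>
    intro t P hM K₀ ha n hn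
    have htne : t.Nonempty := ⟨n, hn⟩
    set n₀ := t.min' htne with hn₀def
    have hn₀ : n₀ ∈ t := t.min'_mem htne
    set Q : ℤ → ℂ[X] := fun m => C (lam m) * (P m).comp (X + 1) - C (lam n₀) * P m with hQdef
    have hXC : (X + 1 : ℂ[X]) = X + C 1 := by rw [map_one]
    have hdegX1 : (X + 1 : ℂ[X]).natDegree = 1 := by rw [hXC]; exact natDegree_X_add_C 1
    have hcompdeg : ∀ m : ℤ, ((P m).comp (X + 1)).natDegree = (P m).natDegree := by
      intro m; rw [natDegree_comp, hdegX1, mul_one]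
    have hcomplead : ∀ m : ℤ, ((P m).comp (X + 1)).leadingCoeff = (P m).leadingCoeff := by
      intro m
      rw [leadingCoeff_comp (by rw [hdegX1]; exact one_ne_zero), hXC, leadingCoeff_X_add_C,
        one_pow, mul_one]
    have hQle : ∀ m : ℤ, (Q m).natDegree ≤ (P m).natDegree := by
      intro m
      refine le_trans (natDegree_sub_le _ _) (max_le ?_ ?_)
      · exact le_trans (natDegree_C_mul_le _ _) (le_of_eq (hcompdeg m))
      · exact natDegree_C_mul_le _ _
    have hQeval : ∀ (m : ℤ) (x : ℂ),
        (Q m).eval x = lam m * (P m).eval (x + 1) - lam n₀ * (P m).eval x := by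
      intro m x; simp [hQdef, eval_comp]
    have haQ : ∀ k : ℕ, K₀ ≤ k → ∑ m ∈ t, (Q m).eval (k : ℂ) * lam m ^ k = 0 := by
      intro k hk
      have e1 := ha (k + 1) (le_trans hk (Nat.le_succ k))
      have e2 := ha k hk
      push_cast at e1
      calc ∑ m ∈ t, (Q m).eval (k : ℂ) * lam m ^ k
          = ∑ m ∈ t, ((P m).eval ((k : ℂ) + 1) * lam m ^ (k + 1)
              - lam n₀ * ((P m).eval (k : ℂ) * lam m ^ k)) := by
            refine Finset.sum_congr rfl fun m _ => ?_
            rw [hQeval]; ring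
        _ = (∑ m ∈ t, (P m).eval ((k : ℂ) + 1) * lam m ^ (k + 1))
              - lam n₀ * ∑ m ∈ t, (P m).eval (k : ℂ) * lam m ^ k := by
            rw [Finset.sum_sub_distrib, Finset.mul_sum]
        _ = 0 := by rw [e1, e2, mul_zero, sub_zero]
    have hfrom : ∀ m ∈ t, m ≠ n₀ → Q m = 0 → P m = 0 := by
      intro m _ hmne hQ0
      by_contra hP0
      have hc : (Q m).coeff (P m).natDegree = (lam m - lam n₀) * (P m).leadingCoeff := by
        rw [hQdef]
        simp only [coeff_sub, coeff_C_mul]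
        rw [show ((P m).comp (X + 1)).coeff (P m).natDegree
            = ((P m).comp (X + 1)).coeff (((P m).comp (X + 1)).natDegree) from by
          rw [hcompdeg], coeff_natDegree, hcomplead, coeff_natDegree]
        ring
      rw [hQ0, coeff_zero] at hc
      have hlam : lam m - lam n₀ ≠ 0 := sub_ne_zero.2 fun h => hmne (hinj h)
      have hl0 := (mul_eq_zero.1 hc.symm).resolve_left hlam
      exact hP0 (leadingCoeff_eq_zero.1 hl0)
    by_cases hd : (P n₀).natDegree = 0
    · -- constant case
      have hPC : P n₀ = C ((P n₀).coeff 0) := eq_C_of_natDegree_eq_zero hd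
      have hQ0 : Q n₀ = 0 := by
        rw [hQdef]; simp only
        rw [hPC, C_comp]; ring
      have hmeas : (∑ m ∈ t.erase n₀, (Q m).natDegree) + (t.erase n₀).card ≤ M := by
        have h1 : (∑ m ∈ t.erase n₀, (Q m).natDegree) ≤ ∑ m ∈ t, (P m).natDegree :=
          le_trans (Finset.sum_le_sum fun m _ => hQle m)
            (Finset.sum_le_sum_of_subset (Finset.erase_subset _ _))
        have h2 : (t.erase n₀).card + 1 = t.card := Finset.card_erase_add_one hn₀
        omega
      have haQ' : ∀ k : ℕ, K₀ ≤ k →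
          ∑ m ∈ t.erase n₀, (Q m).eval (k : ℂ) * lam m ^ k = 0 := by
        intro k hk
        have h := haQ k hk
        rw [← Finset.sum_erase_add t _ hn₀, hQ0] at h
        simpa using h
      have hQall := ih (t.erase n₀) Q hmeas K₀ haQ'
      have hPerase : ∀ m ∈ t.erase n₀, P m = 0 := fun m hm =>
        hfrom m (Finset.mem_of_mem_erase hm) (Finset.ne_of_mem_erase hm) (hQall m hm)
      have hP₀ : P n₀ = 0 := by
        have h := ha K₀ le_rfl
        rw [← Finset.sum_erase_add t _ hn₀,
          Finset.sum_eq_zero (fun m hm => by rw [hPerase m hm]; simp), zero_add] at h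
        have hev : (P n₀).eval (K₀ : ℂ) = 0 :=
          (mul_eq_zero.1 h).resolve_right (pow_ne_zero _ (hne n₀))
        rw [hPC, eval_C] at hev
        rw [hPC, hev, map_zero]
      rcases eq_or_ne n n₀ with rfl | hne'
      · exact hP₀
      · exact hPerase n (Finset.mem_erase.2 ⟨hne', hn⟩)
    · -- nonconstant case: impossible
      exfalso
      have hdpos : 0 < (P n₀).natDegree := Nat.pos_of_ne_zero hd
      have hP0 : P n₀ ≠ 0 := fun h => hd (by rw [h]; simp)
      have hlt : (Q n₀).natDegree < (P n₀).natDegree := by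
        have hQn : Q n₀ = C (lam n₀) * ((P n₀).comp (X + 1) - P n₀) := by
          rw [hQdef]; ring
        have hsub : ((P n₀).comp (X + 1) - P n₀).natDegree < (P n₀).natDegree := by
          rcases eq_or_ne ((P n₀).comp (X + 1) - P n₀) 0 with h0 | h0
          · rw [h0]; simpa using hdpos
          · refine natDegree_lt_natDegree h0 ?_
            have hcne : (P n₀).comp (X + 1) ≠ 0 := fun h => by
              have hl := hcomplead n₀
              rw [h] at hl
              exact hP0 (leadingCoeff_eq_zero.1 (by rw [← hl]; simp))
            have hdeq : ((P n₀).comp (X + 1)).degree = (P n₀).degree := by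
              rw [degree_eq_natDegree hcne, degree_eq_natDegree hP0, hcompdeg]
            calc ((P n₀).comp (X + 1) - P n₀).degree
                < ((P n₀).comp (X + 1)).degree :=
                  degree_sub_lt hdeq hcne (by rw [hcomplead])
              _ = (P n₀).degree := hdeq
        exact lt_of_le_of_lt (by rw [hQn]; exact natDegree_C_mul_le _ _) hsub
      have hmeas : (∑ m ∈ t, (Q m).natDegree) + t.card ≤ M := by
        have hsum : (∑ m ∈ t, (Q m).natDegree) < ∑ m ∈ t, (P m).natDegree :=
          Finset.sum_lt_sum (fun m _ => hQle m) ⟨n₀, hn₀, hlt⟩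
        omega
      have hQall := ih t Q hmeas K₀ haQ
      have hcompeq : (P n₀).comp (X + 1) = P n₀ := by
        have h0 := hQall n₀ hn₀
        rw [hQdef] at h0
        simp only at h0
        have h1 : C (lam n₀) * (P n₀).comp (X + 1) = C (lam n₀) * P n₀ := sub_eq_zero.1 h0
        exact mul_left_cancel₀ (fun hC => hne n₀ (by simpa using congrArg (fun p => p.coeff 0) hC)) h1
      have heval : ∀ x : ℂ, (P n₀).eval (x + 1) = (P n₀).eval x := by
        intro x
        have h := congrArg (eval x) hcompeq
        rwa [eval_comp, eval_add, eval_X, eval_one] at h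
      have hconst : ∀ j : ℕ, (P n₀).eval (j : ℂ) = (P n₀).eval 0 := by
        intro j
        induction j with
        | zero => norm_num
        | succ j hj => push_cast; rw [heval]; push_cast at hj; exact hj
      have hR0 : P n₀ - C ((P n₀).eval 0) = 0 := by
        apply Polynomial.eq_zero_of_infinite_isRoot
        apply Set.Infinite.mono (s := Set.range (Nat.cast : ℕ → ℂ))
          ?_ (Set.infinite_range_of_injective Nat.cast_injective)
        rintro x ⟨j, rfl⟩
        simp [Polynomial.IsRoot, hconst j]
      have hPeq : P n₀ = C ((P n₀).eval 0) := by rwa [sub_eq_zero] at hR0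
      rw [hPeq] at hd
      simp at hd

/-- Key step of Proposition 3.4: if `g(w,t) = ∑ i, g i w * h i t` is an `A₀`-function of
two variables, `l` is a positive integer, and `g(m - l, m) = 0` for all sufficiently
large integers `m`, then `g(w - l, w) = 0` for all complex `w`. -/
theorem A0_near_diagonal_vanishing (q : ℂ) (hq0 : 0 < ‖q‖)
    (hq1 : ‖q‖ < 1)
    (N : ℕ) (g h : Fin N → ℂ → ℂ)
    (hg : ∀ i, IsA0 q (g i)) (hh : ∀ i, IsA0 q (h i))
    (f : ℂ → ℂ → ℂ) (hf : ∀ w t : ℂ, f w t = ∑ i, g i w * h i t)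
    (l : ℤ) (hl : 0 < l)
    (K : ℤ) (hK : ∀ m : ℤ, K < m → f ((m : ℂ) - (l : ℂ)) (m : ℂ) = 0) :
    ∀ w : ℂ, f (w - (l : ℂ)) w = 0 := by
  classical
  intro w
  set F : ℂ → ℂ := fun w => f (w - (l : ℂ)) w with hF
  have hFmem : F ∈ A0span q := by
    have hrep : F = ∑ i, (fun w => g i (w - (l : ℂ))) * h i := by
      funext x
      simp only [hF, Finset.sum_apply, Pi.mul_apply]
      exact hf _ _
    rw [hrep]
    exact Submodule.sum_mem _ fun i _ =>
      A0span_mul_mem q (A0span_shift_mem q _ (mem_A0span_of_isA0 (hg i)))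
        (mem_A0span_of_isA0 (hh i))
  obtain ⟨c, hcF⟩ := Finsupp.mem_span_range_iff_exists_finsupp.1 hFmem
  have hFw : ∀ x : ℂ, F x = ∑ p ∈ c.support,
      c p * (x ^ p.1 * Complex.exp ((p.2 : ℂ) * Complex.log q * x)) := by
    intro x
    rw [← hcF, Finsupp.sum, Finset.sum_apply]
    refine Finset.sum_congr rfl fun p _ => ?_
    simp [Bfun]
  set t := c.support.image Prod.snd with ht
  set P : ℤ → ℂ[X] := fun n =>
    ∑ p ∈ c.support.filter (fun p => p.2 = n), Polynomial.C (c p) * Polynomial.X ^ p.1 with hP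
  have hFt : ∀ x : ℂ, F x = ∑ n ∈ t,
      (P n).eval x * Complex.exp ((n : ℂ) * Complex.log q * x) := by
    intro x
    rw [hFw x, ← Finset.sum_fiberwise_of_maps_to
      (fun p hp => Finset.mem_image_of_mem Prod.snd hp)
      (fun p => c p * (x ^ p.1 * Complex.exp ((p.2 : ℂ) * Complex.log q * x)))]
    refine Finset.sum_congr rfl fun n hn => ?_
    rw [hP]
    simp only
    rw [Polynomial.eval_finset_sum, Finset.sum_mul]
    refine Finset.sum_congr rfl fun p hp => ?_
    have hp2 : p.2 = n := (Finset.mem_filter.1 hp).2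
    rw [hp2]
    simp only [eval_mul, eval_C, eval_pow, eval_X]
    ring
  set lam : ℤ → ℂ := fun n => Complex.exp ((n : ℂ) * Complex.log q) with hlam
  have hne : ∀ n, lam n ≠ 0 := fun n => Complex.exp_ne_zero _
  have hinj : Function.Injective lam := by
    intro a b hab
    have habs := congrArg (fun z : ℂ => ‖z‖) hab
    rw [hlam] at habs
    simp only [Complex.norm_exp] at habs
    have h1 : ∀ m : ℤ, ((m : ℂ) * Complex.log q).re = (m : ℝ) * (Complex.log q).re := by
      intro m; simp [Complex.mul_re]
    rw [h1 a, h1 b] at habs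
    have heq := Real.exp_injective habs
    have hLre : (Complex.log q).re ≠ 0 := by
      rw [Complex.log_re]
      intro h0
      rcases Real.log_eq_zero.1 h0 with h' | h' | h'
      · exact absurd h' (ne_of_gt hq0)
      · exact absurd h' (ne_of_lt hq1)
      · nlinarith
    have : (a : ℝ) = b := mul_right_cancel₀ hLre heq
    exact_mod_cast this
  set K₀ : ℕ := K.toNat + 1 with hK₀
  have hseq : ∀ k : ℕ, K₀ ≤ k → ∑ n ∈ t, (P n).eval (k : ℂ) * lam n ^ k = 0 := by
    intro k hk
    have hKk : K < (k : ℤ) := by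
      have := Int.self_le_toNat K
      omega
    have h0 : F (k : ℂ) = 0 := by
      have hk0 := hK (k : ℤ) hKk
      simp only [hF]
      push_cast at hk0 ⊢
      exact hk0
    rw [hFt (k : ℂ)] at h0
    rw [← h0]
    refine Finset.sum_congr rfl fun n _ => ?_
    congr 1
    rw [hlam]
    simp only
    rw [← Complex.exp_nat_mul]
    congr 1
    push_cast
    ring
  have hPall := seq_key lam hne hinj ((∑ n ∈ t, (P n).natDegree) + t.card) t P le_rfl K₀ hseq
  have hfin := hFt w
  rw [Finset.sum_eq_zero (fun n hn => by rw [hPall n hn]; simp)] at hfin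
  simpa [hF] using hfin
end

section
/- Let n ≥ 1 be an integer, m a nonzero integer, q ∈ ℂ with 0 < |q| < 1, and ω = exp(2πi/n). Then Σ_{α=0}^{n−1} (1/n) · q^m ω^α (1 + q^m ω^α) / (1 − q^m ω^α)³ = n² q^{mn} (1 + q^{mn}) / (1 − q^{mn})³. (Lemma 2.10; note that 1 − q^m ω^α ≠ 0 and 1 − q^{mn} ≠ 0 since |q^m| ≠ 1.) -/
/-- Sum of the series `∑ k² x^k` for `‖x‖ < 1`. -/
lemma hasSum_sq_mul_geometric {x : ℂ} (hx : ‖x‖ < 1) :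
    HasSum (fun k : ℕ => (k : ℂ) ^ 2 * x ^ k) (x * (1 + x) / (1 - x) ^ 3) := by
  have hx1 : (1 : ℂ) - x ≠ 0 := by
    intro h
    rw [sub_eq_zero] at h
    rw [← h] at hx
    simp at hx
  have hs2 : Summable (fun k : ℕ => (k : ℂ) ^ 2 * x ^ k) :=
    summable_pow_mul_geometric_of_norm_lt_one 2 hx
  have hs1 : Summable (fun k : ℕ => (k : ℂ) * x ^ k) := by
    simpa using summable_pow_mul_geometric_of_norm_lt_one 1 hx
  have hs0 : Summable (fun k : ℕ => x ^ k) := summable_geometric_of_norm_lt_one hx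
  have t1 : ∑' k : ℕ, (k : ℂ) * x ^ k = x / (1 - x) ^ 2 :=
    tsum_coe_mul_geometric_of_norm_lt_one hx
  have t0 : ∑' k : ℕ, x ^ k = (1 - x)⁻¹ := tsum_geometric_of_norm_lt_one hx
  have key : ∑' k : ℕ, (k : ℂ) ^ 2 * x ^ k
      = x * (∑' k : ℕ, (k : ℂ) ^ 2 * x ^ k) + 2 * x * (x / (1 - x) ^ 2) + x * (1 - x)⁻¹ := by
    have hfun : (fun k : ℕ => ((k + 1 : ℕ) : ℂ) ^ 2 * x ^ (k + 1))
        = fun k : ℕ => x * ((k : ℂ) ^ 2 * x ^ k) + (2 * x * ((k : ℂ) * x ^ k) + x * x ^ k) := by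
      funext k
      push_cast
      rw [pow_succ]
      ring
    conv_lhs => rw [Summable.tsum_eq_zero_add hs2]
    rw [hfun, Summable.tsum_add (hs2.mul_left x) ((hs1.mul_left (2*x)).add (hs0.mul_left x)),
      Summable.tsum_add (hs1.mul_left (2*x)) (hs0.mul_left x), tsum_mul_left, tsum_mul_left,
      tsum_mul_left, t1, t0]
    push_cast
    ring
  have hinv : (1 - x) * (1 - x)⁻¹ = 1 := mul_inv_cancel₀ hx1
  have hinv2 : (1 - x) ^ 2 * ((1 - x) ^ 2)⁻¹ = 1 := mul_inv_cancel₀ (pow_ne_zero 2 hx1)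
  have hgoal : ∑' k : ℕ, (k : ℂ) ^ 2 * x ^ k = x * (1 + x) / (1 - x) ^ 3 := by
    rw [eq_div_iff (pow_ne_zero 3 hx1)]
    linear_combination (1 - x) ^ 2 * key + 2 * x ^ 2 * hinv2 + x * (1 - x) * hinv
  exact hgoal ▸ hs2.hasSum

/-- A primitive `n`-th root of unity in `ℂ` has norm one. -/
lemma norm_one_of_prim {n : ℕ} (hn0 : n ≠ 0) {ω : ℂ} (hprim : IsPrimitiveRoot ω n) :
    ‖ω‖ = 1 := by
  have h1 : ‖ω‖ ^ n = 1 := by rw [← norm_pow, hprim.pow_eq_one, norm_one]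
  rcases lt_trichotomy ‖ω‖ 1 with h | h | h
  · have := pow_lt_one₀ (norm_nonneg ω) h hn0
    linarith
  · exact h
  · have := one_lt_pow₀ h hn0
    linarith

lemma one_sub_ne {z : ℂ} (hz : ‖z‖ < 1) : (1 : ℂ) - z ≠ 0 := by
  intro h
  rw [sub_eq_zero] at h
  rw [← h] at hz
  simp at hz

/-- The core identity, valid for `‖x‖ < 1` and any primitive `n`-th root `ω`. -/
lemma core_sum {n : ℕ} (hn : 1 ≤ n) {ω : ℂ} (hprim : IsPrimitiveRoot ω n)
    {x : ℂ} (hx : ‖x‖ < 1) :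
    ∑ α ∈ Finset.range n, x * ω ^ α * (1 + x * ω ^ α) / (1 - x * ω ^ α) ^ 3
      = (n : ℂ) ^ 3 * (x ^ n * (1 + x ^ n) / (1 - x ^ n) ^ 3) := by
  have hn0 : n ≠ 0 := by omega
  have hωn : ω ^ n = 1 := hprim.pow_eq_one
  have hnorm : ‖ω‖ = 1 := norm_one_of_prim hn0 hprim
  have hterm : ∀ α : ℕ, HasSum (fun k : ℕ => (k : ℂ) ^ 2 * (x * ω ^ α) ^ k)
      (x * ω ^ α * (1 + x * ω ^ α) / (1 - x * ω ^ α) ^ 3) := by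
    intro α
    have : ‖x * ω ^ α‖ < 1 := by
      rw [norm_mul, norm_pow, hnorm, one_pow, mul_one]
      exact hx
    exact hasSum_sq_mul_geometric this
  have H : HasSum (fun k : ℕ => ∑ α ∈ Finset.range n, (k : ℂ) ^ 2 * (x * ω ^ α) ^ k)
      (∑ α ∈ Finset.range n, x * ω ^ α * (1 + x * ω ^ α) / (1 - x * ω ^ α) ^ 3) :=
    hasSum_sum (fun α _ => hterm α)
  have hfilter : (fun k : ℕ => ∑ α ∈ Finset.range n, (k : ℂ) ^ 2 * (x * ω ^ α) ^ k)
      = fun k : ℕ => (if n ∣ k then (n : ℂ) else 0) * ((k : ℂ) ^ 2 * x ^ k) := by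
    funext k
    have : ∑ α ∈ Finset.range n, (x * ω ^ α) ^ k
        = (if n ∣ k then (n : ℂ) else 0) * x ^ k := by
      have hrw : ∀ α : ℕ, (x * ω ^ α) ^ k = (ω ^ k) ^ α * x ^ k := by
        intro α
        rw [mul_pow, ← pow_mul, ← pow_mul, mul_comm α k]
        ring
      rw [Finset.sum_congr rfl (fun α _ => hrw α), ← Finset.sum_mul]
      congr 1
      by_cases h : (n : ℕ) ∣ k
      · have : ω ^ k = 1 := (hprim.pow_eq_one_iff_dvd k).2 h
        simp [this, h]
      · have hne : ω ^ k ≠ 1 := fun hh => h ((hprim.pow_eq_one_iff_dvd k).1 hh)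
        rw [if_neg h, geom_sum_eq hne, ← pow_mul, mul_comm k n, pow_mul, hωn, one_pow]
        simp
    calc ∑ α ∈ Finset.range n, (k : ℂ) ^ 2 * (x * ω ^ α) ^ k
        = (k : ℂ) ^ 2 * ∑ α ∈ Finset.range n, (x * ω ^ α) ^ k := by
          rw [Finset.mul_sum]
      _ = (if n ∣ k then (n : ℂ) else 0) * ((k : ℂ) ^ 2 * x ^ k) := by rw [this]; ring
  rw [hfilter] at H
  have hxn : ‖x ^ n‖ < 1 := by
    rw [norm_pow]
    exact pow_lt_one₀ (norm_nonneg x) hx hn0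
  have Hbase : HasSum (fun j : ℕ => (n : ℂ) ^ 3 * ((j : ℂ) ^ 2 * (x ^ n) ^ j))
      ((n : ℂ) ^ 3 * (x ^ n * (1 + x ^ n) / (1 - x ^ n) ^ 3)) :=
    (hasSum_sq_mul_geometric hxn).mul_left _
  have hinj : Function.Injective (fun j : ℕ => n * j) :=
    fun a b h => by simpa [hn0] using h
  have hvanish : ∀ k : ℕ, k ∉ Set.range (fun j : ℕ => n * j) →
      (if n ∣ k then (n : ℂ) else 0) * ((k : ℂ) ^ 2 * x ^ k) = 0 := by
    intro k hk
    have : ¬ n ∣ k := by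
      intro ⟨c, hc⟩
      exact hk ⟨c, hc.symm⟩
    simp [this]
  have hcomp : ((fun k : ℕ => (if n ∣ k then (n : ℂ) else 0) * ((k : ℂ) ^ 2 * x ^ k))
      ∘ (fun j : ℕ => n * j))
      = fun j : ℕ => (n : ℂ) ^ 3 * ((j : ℂ) ^ 2 * (x ^ n) ^ j) := by
    funext j
    simp only [Function.comp_apply, if_pos (Dvd.intro j rfl), ← pow_mul]
    push_cast
    ring
  have H2 : HasSum (fun k : ℕ => (if n ∣ k then (n : ℂ) else 0) * ((k : ℂ) ^ 2 * x ^ k))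
      ((n : ℂ) ^ 3 * (x ^ n * (1 + x ^ n) / (1 - x ^ n) ^ 3)) := by
    rw [← Function.Injective.hasSum_iff hinj hvanish, hcomp]
    exact Hbase
  exact H.unique H2

/-- Inversion identity for `f(v) = v(1+v)/(1-v)³`: `f(v⁻¹) = -f(v)`. -/
lemma inv_term {v : ℂ} (hv0 : v ≠ 0) (hv1 : (1 : ℂ) - v ≠ 0) :
    v⁻¹ * (1 + v⁻¹) / (1 - v⁻¹) ^ 3 = -(v * (1 + v) / (1 - v) ^ 3) := by
  have h3 : (1 : ℂ) - v⁻¹ ≠ 0 := by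
    intro h
    rw [sub_eq_zero, eq_comm, inv_eq_one] at h
    exact hv1 (by rw [h]; ring)
  have E : v⁻¹ * (1 + v⁻¹) * (1 - v) ^ 3 = -(v * (1 + v)) * (1 - v⁻¹) ^ 3 := by
    field_simp
    ring
  rw [← neg_div, div_eq_div_iff (pow_ne_zero 3 h3) (pow_ne_zero 3 hv1), E]

/-- Lemma 2.10: for `n ≥ 1`, `m ≠ 0`, `0 < |q| < 1` and `ω = exp(2πi/n)`,
`∑_{α=0}^{n-1} (1/n) q^m ω^α (1 + q^m ω^α)/(1 - q^m ω^α)³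
  = n² q^{mn} (1 + q^{mn})/(1 - q^{mn})³`. -/
theorem root_of_unity_sum (n : ℕ) (hn : 1 ≤ n) (m : ℤ) (hm : m ≠ 0)
    (q : ℂ) (hq0 : 0 < ‖q‖) (hq1 : ‖q‖ < 1)
    (ω : ℂ) (hω : ω = Complex.exp (2 * Real.pi * Complex.I / (n : ℂ))) :
    ∑ α ∈ Finset.range n,
        (n : ℂ)⁻¹ * (q ^ m * ω ^ α * (1 + q ^ m * ω ^ α)) / (1 - q ^ m * ω ^ α) ^ 3
      = (n : ℂ) ^ 2 * q ^ (m * (n : ℤ)) * (1 + q ^ (m * (n : ℤ)))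
          / (1 - q ^ (m * (n : ℤ))) ^ 3 := by
  have hn0 : n ≠ 0 := by omega
  have hnC : (n : ℂ) ≠ 0 := Nat.cast_ne_zero.2 hn0
  have hq : q ≠ 0 := by
    intro h; rw [h] at hq0; simp at hq0
  have hprim : IsPrimitiveRoot ω n := by
    rw [hω]; exact Complex.isPrimitiveRoot_exp n hn0
  have hnorm : ‖ω‖ = 1 := norm_one_of_prim hn0 hprim
  rcases hm.lt_or_gt with hneg | hpos
  · -- m < 0
    set k : ℕ := (-m).toNat with hk
    have hkm : (k : ℤ) = -m := Int.toNat_of_nonneg (by omega)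
    have hm' : m = -(k : ℤ) := by omega
    have hk0 : k ≠ 0 := by
      intro h; rw [h] at hkm; omega
    have hqm : q ^ m = (q ^ k)⁻¹ := by
      rw [hm', zpow_neg, zpow_natCast]
    have hx : ‖q ^ k‖ < 1 := by
      rw [norm_pow]
      exact pow_lt_one₀ hq0.le hq1 hk0
    have hx0 : q ^ k ≠ 0 := pow_ne_zero _ hq
    have hqmn : q ^ (m * (n : ℤ)) = ((q ^ k) ^ n)⁻¹ := by
      rw [← pow_mul, hm']
      rw [show (-(k : ℤ)) * (n : ℤ) = -((k * n : ℕ) : ℤ) by push_cast; ring,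
        zpow_neg, zpow_natCast]
    have hy0 : (q ^ k) ^ n ≠ 0 := pow_ne_zero _ hx0
    have hy1 : (1 : ℂ) - (q ^ k) ^ n ≠ 0 := by
      apply one_sub_ne
      rw [norm_pow]
      exact pow_lt_one₀ (norm_nonneg _) hx hn0
    have hterm : ∀ α : ℕ,
        (n : ℂ)⁻¹ * (q ^ m * ω ^ α * (1 + q ^ m * ω ^ α)) / (1 - q ^ m * ω ^ α) ^ 3
        = -((n : ℂ)⁻¹ * (q ^ k * ω⁻¹ ^ α * (1 + q ^ k * ω⁻¹ ^ α)
            / (1 - q ^ k * ω⁻¹ ^ α) ^ 3)) := by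
      intro α
      have hv0 : q ^ k * ω⁻¹ ^ α ≠ 0 := by
        apply mul_ne_zero hx0
        apply pow_ne_zero
        simp only [ne_eq, inv_eq_zero]
        intro h
        rw [h] at hnorm
        simp at hnorm
      have hv1 : (1 : ℂ) - q ^ k * ω⁻¹ ^ α ≠ 0 := by
        apply one_sub_ne
        have : ‖q ^ k * ω⁻¹ ^ α‖ = ‖q ^ k‖ := by
          simp [norm_mul, norm_pow, norm_inv, hnorm]
        rw [this]
        exact hx
      have huv : q ^ m * ω ^ α = (q ^ k * ω⁻¹ ^ α)⁻¹ := by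
        rw [hqm, mul_inv, inv_pow, inv_inv]
      rw [mul_div_assoc, huv, inv_term hv0 hv1, mul_neg]
    calc ∑ α ∈ Finset.range n,
          (n : ℂ)⁻¹ * (q ^ m * ω ^ α * (1 + q ^ m * ω ^ α)) / (1 - q ^ m * ω ^ α) ^ 3
        = ∑ α ∈ Finset.range n, -((n : ℂ)⁻¹ * (q ^ k * ω⁻¹ ^ α * (1 + q ^ k * ω⁻¹ ^ α)
            / (1 - q ^ k * ω⁻¹ ^ α) ^ 3)) := Finset.sum_congr rfl fun α _ => hterm α
      _ = -((n : ℂ)⁻¹ * ∑ α ∈ Finset.range n, q ^ k * ω⁻¹ ^ α * (1 + q ^ k * ω⁻¹ ^ α)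
            / (1 - q ^ k * ω⁻¹ ^ α) ^ 3) := by
          rw [Finset.sum_neg_distrib, Finset.mul_sum]
      _ = -((n : ℂ)⁻¹ * ((n : ℂ) ^ 3
            * ((q ^ k) ^ n * (1 + (q ^ k) ^ n) / (1 - (q ^ k) ^ n) ^ 3))) := by
          rw [core_sum hn hprim.inv hx]
      _ = (n : ℂ) ^ 2 * q ^ (m * (n : ℤ)) * (1 + q ^ (m * (n : ℤ)))
            / (1 - q ^ (m * (n : ℤ))) ^ 3 := by
          have h2 : (n : ℂ) ^ 2 * ((q ^ k) ^ n)⁻¹ * (1 + ((q ^ k) ^ n)⁻¹)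
              / (1 - ((q ^ k) ^ n)⁻¹) ^ 3
              = (n : ℂ) ^ 2 * (((q ^ k) ^ n)⁻¹ * (1 + ((q ^ k) ^ n)⁻¹)
                / (1 - ((q ^ k) ^ n)⁻¹) ^ 3) := by
            ring
          rw [hqmn, h2, inv_term hy0 hy1, mul_neg, neg_inj]
          field_simp
  · -- 0 < m
    set k : ℕ := m.toNat with hk
    have hkm : (k : ℤ) = m := Int.toNat_of_nonneg (by omega)
    have hk0 : k ≠ 0 := by
      intro h; rw [h] at hkm; omega
    have hqm : q ^ m = q ^ k := by rw [← hkm, zpow_natCast]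
    have hx : ‖q ^ k‖ < 1 := by
      rw [norm_pow]
      exact pow_lt_one₀ hq0.le hq1 hk0
    have hqmn : q ^ (m * (n : ℤ)) = (q ^ k) ^ n := by
      rw [← pow_mul, ← hkm, ← zpow_natCast q (k * n)]
      push_cast
      ring_nf
    have hxn : (1 : ℂ) - (q ^ k) ^ n ≠ 0 := by
      apply one_sub_ne
      rw [norm_pow]
      exact pow_lt_one₀ (norm_nonneg _) hx hn0
    rw [hqm, hqmn]
    calc ∑ α ∈ Finset.range n,
          (n : ℂ)⁻¹ * (q ^ k * ω ^ α * (1 + q ^ k * ω ^ α)) / (1 - q ^ k * ω ^ α) ^ 3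
        = (n : ℂ)⁻¹ * ∑ α ∈ Finset.range n,
            q ^ k * ω ^ α * (1 + q ^ k * ω ^ α) / (1 - q ^ k * ω ^ α) ^ 3 := by
          rw [Finset.mul_sum]
          exact Finset.sum_congr rfl fun α _ => by rw [mul_div_assoc]
      _ = (n : ℂ)⁻¹ * ((n : ℂ) ^ 3 * ((q ^ k) ^ n * (1 + (q ^ k) ^ n) / (1 - (q ^ k) ^ n) ^ 3)) := by
          rw [core_sum hn hprim hx]
      _ = (n : ℂ) ^ 2 * (q ^ k) ^ n * (1 + (q ^ k) ^ n) / (1 - (q ^ k) ^ n) ^ 3 := by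
          field_simp
end

section
/- Let n ≥ 1 and q ∈ ℂ with 0 < |q| < 1. Let f, g ∈ ℂ((z⁻¹)) with coefficients (f_m), (g_m), and set f₀ = Res f. Let f̄ = (f(z), f(q⁻¹z),…,f(q^{−(n−1)}z)) ∈ U_n and ḡ = (g(z), g(q⁻¹z),…,g(q^{−(n−1)}z)) ∈ U_n. Suppose G ∈ H_n satisfies (1 − ĥτ̂_n)G = f̄ − f₀·𝟙 and Σ_{j=0}^{n−1} Res G_j = 0. Then ⟨½(G + ĥτ̂_n G), ḡ⟩ = (n²/2) Σ_{m ∈ ℤ, m ≠ 0} f_m g_{−m} (1 + q^{mn})/(1 − q^{mn}), the sum on the right having only finitely many nonzero terms. (Theorem 2.4: the U_n-block of the r-matrix r̂⁰_{0,n} = ½(1+ĥτ̂_n)(1−ĥτ̂_n)⁻¹P₀′ equals (n/2)(1+ĥⁿ)(1−ĥⁿ)⁻¹P₀′.) -/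
noncomputable section

/-- Dilation operator: `(dil q k a)(z) = a(q^k z)`.
A formal Laurent series `a(z) = ∑_{m ≤ N} a_m z^m ∈ ℂ((z⁻¹))` is encoded as the
Hahn series `F : LaurentSeries ℂ` with `F.coeff j = a_{-j}` (support bounded below,
i.e. finitely many positive powers of `z`); dilation sends `a_m ↦ q^{k m} a_m`,
i.e. `coeff j ↦ q^{-(k j)} * coeff j`. -/
def dil (q : ℂ) (k : ℤ) (F : LaurentSeries ℂ) : LaurentSeries ℂ where
  coeff := fun j => q ^ (-(k * j)) * F.coeff j
  isPWO_support' := by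
    apply F.isPWO_support'.mono
    intro j hj
    simp only [Function.mem_support] at hj ⊢
    intro h
    exact hj (by rw [h, mul_zero])

/-- `Res a = a₀`, the coefficient of `z⁰`. -/
def Res (F : LaurentSeries ℂ) : ℂ := F.coeff 0

/-- The bilinear pairing `⟨F, G⟩ = ∑_j Res (F_j G_j)` on `H_n = (ℂ((z⁻¹)))^n`. -/
def pair {n : ℕ} (F G : Fin n → LaurentSeries ℂ) : ℂ := ∑ j, Res (F j * G j)

/-- The operator `ĥτ̂_n` on `H_n`: `(ĥτ̂_n F)_j (z) = F_{j+1 mod n} (q z)`. -/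
def htau (q : ℂ) {n : ℕ} [NeZero n] (F : Fin n → LaurentSeries ℂ) :
    Fin n → LaurentSeries ℂ := fun j => dil q 1 (F (j + 1))

/-- `F ∈ U_n`, i.e. `F = (u(z), u(q⁻¹ z), …, u(q^{-(n-1)} z))` for some `u ∈ ℂ((z⁻¹))`. -/
def InU (q : ℂ) {n : ℕ} (F : Fin n → LaurentSeries ℂ) : Prop :=
  ∃ u : LaurentSeries ℂ, ∀ j : Fin n, F j = dil q (-((j : ℕ) : ℤ)) u

end

lemma aux_finite (f g : LaurentSeries ℂ) :
    {m : ℤ | f.coeff (-m) ≠ 0 ∧ g.coeff m ≠ 0}.Finite := by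
  rcases Set.eq_empty_or_nonempty {m : ℤ | f.coeff (-m) ≠ 0 ∧ g.coeff m ≠ 0} with h | ⟨m0, hm0⟩
  · simp [h]
  · have hfne : f.support.Nonempty := ⟨-m0, hm0.1⟩
    have hgne : g.support.Nonempty := ⟨m0, hm0.2⟩
    have hfw := f.isPWO_support.isWF
    have hgw := g.isPWO_support.isWF
    apply Set.Finite.subset (Set.finite_Icc (hgw.min hgne) (-(hfw.min hfne)))
    rintro m ⟨h1, h2⟩
    refine ⟨hgw.min_le hgne h2, ?_⟩
    have := hfw.min_le hfne h1
    omega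

lemma res_mul (x y : LaurentSeries ℂ) (T : Finset ℤ)
    (hT : ∀ i, x.coeff i ≠ 0 → y.coeff (-i) ≠ 0 → i ∈ T) :
    Res (x * y) = ∑ i ∈ T, x.coeff i * y.coeff (-i) := by
  classical
  set A := Finset.antidiagonal x.isPWO_support y.isPWO_support 0 with hA
  have e1 : Res (x * y) = ∑ ij ∈ A, (fun i => x.coeff i * y.coeff (-i)) ij.1 := by
    rw [Res, HahnSeries.coeff_mul]
    refine Finset.sum_congr rfl ?_
    intro p hp
    rw [hA, Finset.mem_antidiagonal] at hp
    have h2 : p.2 = -p.1 := by omega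
    simp only [h2]
  have hinj : ∀ p ∈ A, ∀ p' ∈ A, p.1 = p'.1 → p = p' := by
    intro p hp p' hp' h
    rw [hA, Finset.mem_antidiagonal] at hp hp'
    have : p.2 = p'.2 := by omega
    exact Prod.ext h this
  have e2 := Finset.sum_image (s := A) (g := Prod.fst) (f := fun i => x.coeff i * y.coeff (-i)) hinj
  have e3 : ∑ i ∈ A.image Prod.fst, x.coeff i * y.coeff (-i)
      = ∑ i ∈ T, x.coeff i * y.coeff (-i) := by
    apply Finset.sum_subset
    · intro i hi
      simp only [Finset.mem_image] at hi
      obtain ⟨p, hp, rfl⟩ := hi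
      rw [hA, Finset.mem_antidiagonal] at hp
      have h2 : p.2 = -p.1 := by omega
      exact hT p.1 hp.1 (h2 ▸ hp.2.1)
    · intro i hiT hi
      by_contra hne
      apply hi
      simp only [Finset.mem_image]
      refine ⟨(i, -i), ?_, rfl⟩
      rw [hA, Finset.mem_antidiagonal]
      refine ⟨fun h => hne ?_, fun h => hne ?_, by ring⟩
      · simp [h]
      · simp [h]
  rw [e1, ← e2, e3]

lemma dil_coeff (q : ℂ) (k : ℤ) (F : LaurentSeries ℂ) (i : ℤ) :
    (dil q k F).coeff i = q ^ (-(k * i)) * F.coeff i := rfl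


open Fin.NatCast in
/-- Theorem 2.4: the `U_n`-block of the regularized Cayley operator
`r̂⁰_{0,n} = ½(1+ĥτ̂_n)(1−ĥτ̂_n)⁻¹ P₀'` equals `(n/2)(1+ĥⁿ)(1−ĥⁿ)⁻¹ P₀'`.
Here `f̄, ḡ ∈ U_n` are the tuples associated to `f, g ∈ ℂ((z⁻¹))`, and `G` is the
regularized preimage of `f̄ − (Res f)·𝟙` under `1 − ĥτ̂_n` normalized by
`∑_j Res G_j = 0`; the Laurent coefficient `f_m` of `z^m` is `f.coeff (-m)`. -/
theorem rmatrix_Un_block (n : ℕ) [NeZero n] (q : ℂ)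
    (hq0 : 0 < ‖q‖) (hq1 : ‖q‖ < 1)
    (f g : LaurentSeries ℂ)
    (fbar gbar : Fin n → LaurentSeries ℂ)
    (hf : ∀ j : Fin n, fbar j = dil q (-((j : ℕ) : ℤ)) f)
    (hg : ∀ j : Fin n, gbar j = dil q (-((j : ℕ) : ℤ)) g)
    (G : Fin n → LaurentSeries ℂ)
    (hG1 : ∀ j, G j - htau q G j = fbar j - (Res f) • (1 : LaurentSeries ℂ))
    (hG2 : ∑ j, Res (G j) = 0) :
    {m : ℤ | m ≠ 0 ∧
        f.coeff (-m) * g.coeff m * ((1 + q ^ (m * (n : ℤ))) / (1 - q ^ (m * (n : ℤ)))) ≠ 0}.Finite ∧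
    pair (fun j => (2⁻¹ : ℂ) • (G j + htau q G j)) gbar
      = ((n : ℂ) ^ 2 / 2) *
          ∑ᶠ (m : ℤ) (_ : m ≠ 0),
            f.coeff (-m) * g.coeff m * ((1 + q ^ (m * (n : ℤ))) / (1 - q ^ (m * (n : ℤ)))) := by
  classical
  have hq : q ≠ 0 := by
    intro h; rw [h] at hq0; simp at hq0
  have hn0 : (n : ℂ) ≠ 0 := Nat.cast_ne_zero.mpr (NeZero.ne n)
  -- q^k ≠ 1 for k ≠ 0
  have habs : ∀ k : ℕ, k ≠ 0 → ‖q‖ ^ k ≠ 1 := by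
    intro k hk h
    exact absurd h (ne_of_lt (pow_lt_one₀ (norm_nonneg q) hq1 hk))
  have hqk : ∀ k : ℤ, k ≠ 0 → q ^ k ≠ 1 := by
    intro k hk h
    have h1 : ‖q‖ ^ k = 1 := by
      rw [← norm_zpow, h, norm_one]
    rcases lt_trichotomy k 0 with hk' | hk' | hk'
    · have h2 : ‖q‖ ^ (-k) = 1 := by
        rw [zpow_neg, h1, inv_one]
      have h3 : ‖q‖ ^ ((-k).toNat) = 1 := by
        rw [← h2, ← zpow_natCast, Int.toNat_of_nonneg (by omega)]
      exact habs _ (by omega) h3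
    · exact hk hk'
    · have h3 : ‖q‖ ^ (k.toNat) = 1 := by
        rw [← h1, ← zpow_natCast, Int.toNat_of_nonneg (by omega)]
      exact habs _ (by omega) h3
  have hne1 : ∀ i : ℤ, i ≠ 0 → (1 : ℂ) - q ^ (-(n : ℤ) * i) ≠ 0 := by
    intro i hi h
    have hk : -(n : ℤ) * i ≠ 0 := by
      have hn := NeZero.ne n
      intro hcon
      rcases mul_eq_zero.mp hcon with h' | h'
      · omega
      · exact hi h'
    exact hqk _ hk (by linear_combination -h)
  -- coefficient form of the defining equation
  have hcoeff : ∀ (j : Fin n) (i : ℤ), (G j).coeff i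
      = q ^ (-i) * (G (j + 1)).coeff i + q ^ (((j : ℕ) : ℤ) * i) * f.coeff i
        - Res f * ((1 : LaurentSeries ℂ).coeff i) := by
    intro j i
    have h := congrArg (fun F : LaurentSeries ℂ => F.coeff i) (hG1 j)
    simp only [HahnSeries.coeff_sub, htau, dil_coeff, hf, HahnSeries.coeff_smul, smul_eq_mul,
      one_mul, neg_mul, neg_neg] at h
    linear_combination h
  -- the zero coefficients vanish
  have hG0 : ∀ j : Fin n, (G j).coeff 0 = 0 := by
    have hstep : ∀ j : Fin n, (G j).coeff 0 = (G (j + 1)).coeff 0 := by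
      intro j
      have h := hcoeff j 0
      rw [Res] at h
      simp only [mul_zero, zpow_zero, one_mul, HahnSeries.coeff_one, if_pos rfl, if_true, mul_one,
        neg_zero] at h
      linear_combination h
    have hconst : ∀ k : ℕ, (G ((k : Fin n))).coeff 0 = (G 0).coeff 0 := by
      intro k
      induction k with
      | zero => simp
      | succ k ih =>
        rw [show ((k + 1 : ℕ) : Fin n) = ((k : ℕ) : Fin n) + 1 by push_cast; ring, ← hstep]
        exact ih
    have hall : ∀ j : Fin n, (G j).coeff 0 = (G 0).coeff 0 := by
      intro j
      have := hconst (j : ℕ)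
      rwa [Fin.cast_val_eq_self] at this
    have hsum : (n : ℂ) * (G 0).coeff 0 = 0 := by
      rw [← hG2]
      rw [Finset.sum_congr rfl (fun j _ => show Res (G j) = (G 0).coeff 0 from hall j)]
      simp [Finset.card_univ, mul_comm]
    intro j
    rw [hall j]
    rcases mul_eq_zero.mp hsum with h | h
    · exact absurd h hn0
    · exact h
  -- explicit formula for the coefficients of G
  have hGc : ∀ (i : ℤ), i ≠ 0 → ∀ j : Fin n,
      (G j).coeff i = f.coeff i * (((n : ℂ) - ((((j : ℕ) : ℤ) : ℂ))) * q ^ (((j : ℕ) : ℤ) * i)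
        + ((((j : ℕ) : ℤ) : ℂ)) * q ^ ((((j : ℕ) : ℤ) - (n : ℤ)) * i))
        * (1 - q ^ (-(n : ℤ) * i))⁻¹ := by
    intro i hi
    have hone : (1 : LaurentSeries ℂ).coeff i = 0 := by
      rw [HahnSeries.coeff_one, if_neg hi]
    set X := q ^ (-(n : ℤ) * i) with hX
    set c := (1 - X)⁻¹ with hc
    have hXne : (1 : ℂ) - X ≠ 0 := hne1 i hi
    have hcX : c * (1 - X) = 1 := inv_mul_cancel₀ hXne
    set K : ℤ → ℂ := fun v => f.coeff i * (((n : ℂ) - (v : ℂ)) * q ^ (v * i)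
        + (v : ℂ) * q ^ ((v - (n : ℤ)) * i)) * c with hK
    have hKrec : ∀ v : ℤ, K v = q ^ (-i) * K (v + 1) + q ^ (v * i) * f.coeff i := by
      intro v
      have e1 : q ^ (-i) * q ^ ((v + 1) * i) = q ^ (v * i) := by
        rw [← zpow_add₀ hq]; congr 1; ring
      have e2 : q ^ (-i) * q ^ ((v + 1 - (n : ℤ)) * i) = q ^ ((v - (n : ℤ)) * i) := by
        rw [← zpow_add₀ hq]; congr 1; ring
      have e3 : q ^ ((v - (n : ℤ)) * i) = q ^ (v * i) * X := by
        rw [hX, ← zpow_add₀ hq]; congr 1; ring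
      simp only [hK]
      push_cast
      linear_combination (-(f.coeff i * c * ((n : ℂ) - (v : ℂ) - 1))) * e1
        + (-(f.coeff i * c * ((v : ℂ) + 1))) * e2
        + (- f.coeff i * c) * e3 + (f.coeff i * q ^ (v * i)) * hcX
    have hK0 : K ((n : ℕ) : ℤ) = K 0 := by
      simp only [hK]
      norm_num
    have hwrap : ∀ j : Fin n, K (((j + 1 : Fin n) : ℕ) : ℤ) = K (((j : ℕ) : ℤ) + 1) := by
      intro j
      have hval : ((j + 1 : Fin n) : ℕ) = ((j : ℕ) + 1) % n := by
        have h1 : (((j : ℕ) + 1 : ℕ) : Fin n) = j + 1 := by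
          push_cast [Fin.cast_val_eq_self]
          rfl
        rw [← h1, Fin.val_natCast]
      by_cases hlt : (j : ℕ) + 1 < n
      · rw [hval, Nat.mod_eq_of_lt hlt]
        push_cast
        ring_nf
      · have heq : (j : ℕ) + 1 = n := by have := j.isLt; omega
        rw [hval, heq, Nat.mod_self]
        have : K ((0 : ℕ) : ℤ) = K ((n : ℕ) : ℤ) := by rw [hK0]; norm_num
        rw [this]
        congr 1
        omega
    have hDrec : ∀ j : Fin n, (G j).coeff i - K (((j : ℕ) : ℤ))
        = q ^ (-i) * ((G (j + 1)).coeff i - K ((((j + 1 : Fin n) : ℕ) : ℤ))) := by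
      intro j
      have h1 := hcoeff j i
      rw [hone, mul_zero, sub_zero] at h1
      have h2 := hKrec (((j : ℕ) : ℤ))
      rw [hwrap j]
      linear_combination h1 - h2
    have hiter : ∀ (k : ℕ) (j : Fin n), (G j).coeff i - K (((j : ℕ) : ℤ))
        = (q ^ (-i)) ^ k * ((G (j + (k : Fin n))).coeff i - K (((j + (k : Fin n)).val : ℤ))) := by
      intro k
      induction k with
      | zero => intro j; simp
      | succ k ih =>
        intro j
        rw [ih j]
        have hc1 : ((k + 1 : ℕ) : Fin n) = ((k : ℕ) : Fin n) + 1 := by push_cast; ring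
        rw [hc1, ← add_assoc, hDrec (j + ((k : ℕ) : Fin n)), pow_succ]
        ring
    have hDzero : ∀ j : Fin n, (G j).coeff i - K (((j : ℕ) : ℤ)) = 0 := by
      intro j
      have h := hiter n j
      rw [Fin.natCast_self, add_zero] at h
      have hpow : (q ^ (-i)) ^ n = X := by
        rw [hX, ← zpow_natCast (q ^ (-i)) n, ← zpow_mul]
        congr 1
        ring
      rw [hpow] at h
      have h2 : (1 - X) * ((G j).coeff i - K (((j : ℕ) : ℤ))) = 0 := by
        linear_combination h
      rcases mul_eq_zero.mp h2 with h3 | h3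
      · exact absurd h3 hXne
      · exact h3
    intro j
    have := hDzero j
    have h4 : (G j).coeff i = K (((j : ℕ) : ℤ)) := by linear_combination this
    rw [h4]
  -- coefficients of the half-sum
  have hFq : ∀ (j : Fin n) (i : ℤ), ((2⁻¹ : ℂ) • (G j + htau q G j)).coeff i
      = 2⁻¹ * ((G j).coeff i + q ^ (-i) * (G (j + 1)).coeff i) := by
    intro j i
    simp only [HahnSeries.coeff_smul, HahnSeries.coeff_add, htau, dil_coeff, smul_eq_mul, one_mul]
  have hF0 : ∀ j : Fin n, ((2⁻¹ : ℂ) • (G j + htau q G j)).coeff 0 = 0 := by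
    intro j
    rw [hFq, hG0, hG0]
    simp
  have hfin : {i : ℤ | f.coeff i ≠ 0 ∧ g.coeff (-i) ≠ 0}.Finite :=
    Set.Finite.subset (aux_finite g f) (fun i hi => ⟨hi.2, hi.1⟩)
  set T : Finset ℤ := hfin.toFinset.erase 0 with hT
  have hmemT : ∀ i : ℤ, i ∈ T ↔ i ≠ 0 ∧ f.coeff i ≠ 0 ∧ g.coeff (-i) ≠ 0 := by
    intro i
    rw [hT, Finset.mem_erase, Set.Finite.mem_toFinset]
    exact Iff.rfl
  constructor
  · apply (aux_finite f g).subset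
    rintro m ⟨hm0, hmt⟩
    constructor
    · intro h; exact hmt (by rw [h, zero_mul, zero_mul])
    · intro h; exact hmt (by rw [h, mul_zero, zero_mul])
  have hres : ∀ j : Fin n, Res ((2⁻¹ : ℂ) • (G j + htau q G j) * gbar j)
      = ∑ i ∈ T, ((2⁻¹ : ℂ) • (G j + htau q G j)).coeff i * (gbar j).coeff (-i) := by
    intro j
    apply res_mul
    intro i hxi hyi
    have hi0 : i ≠ 0 := by rintro rfl; exact hxi (hF0 j)
    rw [hmemT]
    refine ⟨hi0, ?_, ?_⟩
    · intro hfc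
      apply hxi
      rw [hFq]
      have h1 := hcoeff j i
      rw [HahnSeries.coeff_one, if_neg hi0, mul_zero, sub_zero] at h1
      have h2 := hGc i hi0 j
      rw [hfc] at h1 h2
      linear_combination (2⁻¹ : ℂ) * h2 + 2⁻¹ * (h2 - h1)
    · intro hgc
      apply hyi
      rw [hg, dil_coeff, hgc, mul_zero]
  have hpair : pair (fun j => (2⁻¹ : ℂ) • (G j + htau q G j)) gbar
      = ∑ i ∈ T, ∑ j : Fin n, ((2⁻¹ : ℂ) • (G j + htau q G j)).coeff i * (gbar j).coeff (-i) := by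
    show (∑ j : Fin n, Res ((2⁻¹ : ℂ) • (G j + htau q G j) * gbar j)) = _
    rw [Finset.sum_congr rfl (fun j _ => hres j)]
    exact Finset.sum_comm
  have hn1 : (1 : ℕ) ≤ n := Nat.one_le_iff_ne_zero.mpr (NeZero.ne n)
  have hS2 : (∑ j : Fin n, ((((j : ℕ) : ℤ) : ℂ))) * 2 = (n : ℂ) * ((n : ℂ) - 1) := by
    rw [Finset.sum_congr rfl (fun (j : Fin n) (_ : j ∈ Finset.univ) =>
      show ((((j : ℕ) : ℤ) : ℂ)) = (((j : ℕ)) : ℂ) by push_cast; ring)]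
    rw [Fin.sum_univ_eq_sum_range (fun k => ((k : ℕ) : ℂ)) n]
    rw [← Nat.cast_sum]
    rw [show ((2 : ℂ)) = ((2 : ℕ) : ℂ) by norm_num, ← Nat.cast_mul,
      Finset.sum_range_id_mul_two n, Nat.cast_mul, Nat.cast_sub hn1]
    push_cast
    ring
  have hS : (∑ j : Fin n, ((((j : ℕ) : ℤ) : ℂ))) = (n : ℂ) * ((n : ℂ) - 1) / 2 := by
    rw [eq_div_iff (two_ne_zero)]
    exact hS2
  have hinner : ∀ i ∈ T, (∑ j : Fin n,
        ((2⁻¹ : ℂ) • (G j + htau q G j)).coeff i * (gbar j).coeff (-i))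
      = ((n : ℂ) ^ 2 / 2) * (f.coeff i * g.coeff (-i)
          * ((1 + q ^ (-(n : ℤ) * i)) / (1 - q ^ (-(n : ℤ) * i)))) := by
    intro i hiT
    have hi0 : i ≠ 0 := ((hmemT i).mp hiT).1
    set X := q ^ (-(n : ℤ) * i) with hX
    set c := (1 - X)⁻¹ with hc
    have hXne : (1 : ℂ) - X ≠ 0 := hne1 i hi0
    have hcX : c * (1 - X) = 1 := inv_mul_cancel₀ hXne
    have hterm : ∀ j : Fin n, ((2⁻¹ : ℂ) • (G j + htau q G j)).coeff i * (gbar j).coeff (-i)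
        = f.coeff i * g.coeff (-i)
            * ((((n : ℂ) - ((((j : ℕ) : ℤ) : ℂ))) + ((((j : ℕ) : ℤ) : ℂ)) * X) * c - 2⁻¹) := by
      intro j
      rw [hFq, hg, dil_coeff]
      have h1 := hcoeff j i
      rw [HahnSeries.coeff_one, if_neg hi0, mul_zero, sub_zero] at h1
      have h2 := hGc i hi0 j
      rw [← hX, ← hc] at h2
      have e0 : q ^ (-(-((j : ℕ) : ℤ) * (-i))) = q ^ (-(((j : ℕ) : ℤ) * i)) := by
        congr 1; ring
      rw [e0]
      have e2 : q ^ (((j : ℕ) : ℤ) * i) * q ^ (-(((j : ℕ) : ℤ) * i)) = 1 := by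
        rw [← zpow_add₀ hq]; simp
      have e3 : q ^ ((((j : ℕ) : ℤ) - (n : ℤ)) * i) * q ^ (-(((j : ℕ) : ℤ) * i)) = X := by
        rw [hX, ← zpow_add₀ hq]; congr 1; ring
      linear_combination (-(2⁻¹ * q ^ (-(((j : ℕ) : ℤ) * i)) * g.coeff (-i))) * h1
        + (q ^ (-(((j : ℕ) : ℤ) * i)) * g.coeff (-i)) * h2
        + (f.coeff i * c * g.coeff (-i) * ((n : ℂ) - ((((j : ℕ) : ℤ) : ℂ)))
            - 2⁻¹ * f.coeff i * g.coeff (-i)) * e2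
        + (f.coeff i * c * g.coeff (-i) * ((((j : ℕ) : ℤ) : ℂ))) * e3
    rw [Finset.sum_congr rfl (fun j _ => hterm j)]
    have hrw : ∀ j : Fin n, (f.coeff i * g.coeff (-i)
          * ((((n : ℂ) - ((((j : ℕ) : ℤ) : ℂ))) + ((((j : ℕ) : ℤ) : ℂ)) * X) * c - 2⁻¹))
        = f.coeff i * g.coeff (-i) * ((n : ℂ) * c - 2⁻¹)
          + (f.coeff i * g.coeff (-i) * ((X - 1) * c)) * ((((j : ℕ) : ℤ) : ℂ)) := by
      intro j; ring
    rw [Finset.sum_congr rfl (fun j _ => hrw j), Finset.sum_add_distrib, Finset.sum_const,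
      Finset.card_univ, Fintype.card_fin, ← Finset.mul_sum, hS, nsmul_eq_mul]
    rw [hc]
    field_simp
    ring
  rw [hpair, Finset.sum_congr rfl hinner]
  -- now handle the finsum on the right
  have hfsupp : Function.support (fun m : ℤ => if m ≠ 0 then
        f.coeff (-m) * g.coeff m * ((1 + q ^ (m * (n : ℤ))) / (1 - q ^ (m * (n : ℤ)))) else 0)
      ⊆ ↑(T.image (fun i => -i)) := by
    intro m hm
    rw [Function.mem_support] at hm
    by_cases hm0 : m = 0
    · rw [if_neg (by simp [hm0])] at hm
      exact absurd rfl hm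
    · rw [if_pos hm0] at hm
      have hfm : f.coeff (-m) ≠ 0 := by
        intro h; apply hm; rw [h, zero_mul, zero_mul]
      have hgm : g.coeff m ≠ 0 := by
        intro h; apply hm; rw [h, mul_zero, zero_mul]
      rw [Finset.coe_image, Set.mem_image]
      refine ⟨-m, ?_, by ring⟩
      rw [Finset.mem_coe, hmemT]
      exact ⟨by omega, hfm, by rw [neg_neg]; exact hgm⟩
  have hfs : (∑ᶠ (m : ℤ) (_ : m ≠ 0),
        f.coeff (-m) * g.coeff m * ((1 + q ^ (m * (n : ℤ))) / (1 - q ^ (m * (n : ℤ)))))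
      = ∑ m ∈ T.image (fun i => -i),
          f.coeff (-m) * g.coeff m * ((1 + q ^ (m * (n : ℤ))) / (1 - q ^ (m * (n : ℤ)))) := by
    rw [finsum_congr (fun m : ℤ => (finsum_eq_if (p := m ≠ 0)))]
    rw [finsum_eq_sum_of_support_subset _ hfsupp]
    apply Finset.sum_congr rfl
    intro m hm
    rw [Finset.mem_image] at hm
    obtain ⟨i, hiT, rfl⟩ := hm
    have hi0 : i ≠ 0 := ((hmemT i).mp hiT).1
    rw [if_pos (by omega)]
  rw [hfs, Finset.mul_sum]
  rw [Finset.sum_image (fun a _ b _ h => neg_injective h)]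
  apply Finset.sum_congr rfl
  intro i hiT
  rw [neg_neg]
  have : (-i) * (n : ℤ) = -(n : ℤ) * i := by ring
  rw [this]
end

section
/- Let n ≥ 1 and q ∈ ℂ with 0 < |q| < 1. Let 𝕃 = Λ_n + A, where Λ_n is the n×n matrix over ℂ((z⁻¹)) with entries 1 on the first subdiagonal ((Λ_n)_{i+1,i} = 1) and 0 elsewhere, and A is an arbitrary upper triangular n×n matrix over ℂ((z⁻¹)). Then there exists a unique unipotent upper triangular matrix S over ℂ((z⁻¹)) (S_{ii} = 1, S_{ij} = 0 for i > j) such that (ĥS)·𝕃·S⁻¹ is a companion matrix, i.e. has first row (−u_1,…,−u_n) for some u_1,…,u_n ∈ ℂ((z⁻¹)), entries 1 on the first subdiagonal, and 0 elsewhere; here ĥS denotes the matrix obtained by applying the dilation ĥ to each entry of S. (Theorem 2.1: the gauge action of the unipotent loop group on Y_n is free and the companion matrices form a cross-section.) -/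
noncomputable section Aux

lemma dil_zero (q : ℂ) (k : ℤ) : dil q k 0 = 0 := by
  ext j; simp [dil]

lemma dil_one (q : ℂ) (k : ℤ) : dil q k 1 = 1 := by
  ext j
  by_cases h : j = (0 : ℤ)
  · subst h; simp [dil, HahnSeries.coeff_one]
  · simp [dil, HahnSeries.coeff_one, h]

def stepRow (q : ℂ) {n : ℕ} (L : Matrix (Fin n) (Fin n) (LaurentSeries ℂ))
    (v : Fin n → LaurentSeries ℂ) : Fin n → LaurentSeries ℂ :=
  fun j => ∑ k, dil q 1 (v k) * L k j

def rowSeq (q : ℂ) {n : ℕ} (L : Matrix (Fin n) (Fin n) (LaurentSeries ℂ)) :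
    ℕ → Fin n → LaurentSeries ℂ
  | 0 => fun j => if (j : ℕ) = n - 1 then 1 else 0
  | m + 1 => stepRow q L (rowSeq q L m)

lemma stepRow_eq (q : ℂ) {n : ℕ}
    (A Λ : Matrix (Fin n) (Fin n) (LaurentSeries ℂ))
    (hΛ : ∀ i j : Fin n, Λ i j = if (i : ℕ) = (j : ℕ) + 1 then 1 else 0)
    (v : Fin n → LaurentSeries ℂ) (j : Fin n) :
    stepRow q (Λ + A) v j
      = (∑ k, dil q 1 (v k) * A k j)
        + (if h : (j : ℕ) + 1 < n then dil q 1 (v ⟨(j : ℕ) + 1, h⟩) else 0) := by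
  unfold stepRow
  simp only [Matrix.add_apply, mul_add, Finset.sum_add_distrib]
  rw [add_comm]
  congr 1
  by_cases h : (j : ℕ) + 1 < n
  · rw [dif_pos h]
    rw [show (∑ k, dil q 1 (v k) * Λ k j)
        = ∑ k, (if k = (⟨(j : ℕ) + 1, h⟩ : Fin n) then dil q 1 (v k) else 0) from
      Finset.sum_congr rfl fun k _ => by
        rw [hΛ]
        by_cases hk : k = (⟨(j : ℕ) + 1, h⟩ : Fin n)
        · subst hk; simp
        · rw [if_neg (by simpa [Fin.ext_iff] using hk), if_neg hk, mul_zero]]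
    simp
  · rw [dif_neg h]
    refine Finset.sum_eq_zero fun k _ => ?_
    rw [hΛ, if_neg (by have := k.isLt; omega), mul_zero]

lemma rowSeq_tri (q : ℂ) {n : ℕ}
    (A Λ : Matrix (Fin n) (Fin n) (LaurentSeries ℂ))
    (hA : ∀ i j : Fin n, j < i → A i j = 0)
    (hΛ : ∀ i j : Fin n, Λ i j = if (i : ℕ) = (j : ℕ) + 1 then 1 else 0) :
    ∀ m : ℕ, m ≤ n - 1 →
      (∀ j : Fin n, (j : ℕ) < n - 1 - m → rowSeq q (Λ + A) m j = 0) ∧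
      (∀ j : Fin n, (j : ℕ) = n - 1 - m → rowSeq q (Λ + A) m j = 1) := by
  intro m
  induction m with
  | zero =>
    intro _
    constructor
    · intro j hj
      show (if (j : ℕ) = n - 1 then (1 : LaurentSeries ℂ) else 0) = 0
      rw [if_neg (by omega)]
    · intro j hj
      show (if (j : ℕ) = n - 1 then (1 : LaurentSeries ℂ) else 0) = 1
      rw [if_pos (by omega)]
  | succ m ih =>
    intro hm
    have ihm := ih (by omega)
    have hsum : ∀ j : Fin n, (j : ℕ) < n - 1 - m →
        (∑ k, dil q 1 (rowSeq q (Λ + A) m k) * A k j) = 0 := by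
      intro j hj
      refine Finset.sum_eq_zero fun k _ => ?_
      by_cases hk : (k : ℕ) ≤ (j : ℕ)
      · rw [ihm.1 k (by omega), dil_zero, zero_mul]
      · rw [hA k j (by rw [Fin.lt_def]; omega), mul_zero]
    constructor
    · intro j hj
      show stepRow q (Λ + A) (rowSeq q (Λ + A) m) j = 0
      rw [stepRow_eq q A Λ hΛ, hsum j (by omega), zero_add]
      have h : (j : ℕ) + 1 < n := by have := j.isLt; omega
      rw [dif_pos h, ihm.1 ⟨(j : ℕ) + 1, h⟩ (by simp; omega), dil_zero]
    · intro j hj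
      show stepRow q (Λ + A) (rowSeq q (Λ + A) m) j = 1
      rw [stepRow_eq q A Λ hΛ, hsum j (by omega), zero_add]
      have h : (j : ℕ) + 1 < n := by omega
      rw [dif_pos h, ihm.2 ⟨(j : ℕ) + 1, h⟩ (by simp; omega), dil_one]

lemma sum_shift {n : ℕ} (i : Fin n) (hi : 1 ≤ (i : ℕ)) (w : Fin n → LaurentSeries ℂ) :
    ∑ k : Fin n, (if (i : ℕ) = (k : ℕ) + 1 then (1 : LaurentSeries ℂ) else 0) * w k
      = w ⟨(i : ℕ) - 1, by have := i.isLt; omega⟩ := by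
  have hcond : ∀ k : Fin n, ((i : ℕ) = (k : ℕ) + 1)
      ↔ k = (⟨(i : ℕ) - 1, by have := i.isLt; omega⟩ : Fin n) := by
    intro k; rw [Fin.ext_iff]; simp; omega
  simp_rw [hcond]
  simp [ite_mul, Finset.sum_ite_eq']

end Aux

set_option maxHeartbeats 1000000

/-- Theorem 2.1 (cross-section theorem): for every matrix `𝕃 = Λ_n + A` with `A`
upper triangular over `ℂ((z⁻¹))`, there is a unique unipotent upper triangular
matrix `S` such that the gauge transform `(ĥS)·𝕃·S⁻¹` is a companion matrix. -/
theorem cross_section (n : ℕ) (hn : 1 ≤ n) (q : ℂ)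
    (hq0 : 0 < ‖q‖) (hq1 : ‖q‖ < 1)
    (A : Matrix (Fin n) (Fin n) (LaurentSeries ℂ))
    (hA : ∀ i j : Fin n, j < i → A i j = 0)
    (Λ : Matrix (Fin n) (Fin n) (LaurentSeries ℂ))
    (hΛ : ∀ i j : Fin n, Λ i j = if (i : ℕ) = (j : ℕ) + 1 then 1 else 0) :
    ∃! S : Matrix (Fin n) (Fin n) (LaurentSeries ℂ),
      (∀ i, S i i = 1) ∧ (∀ i j : Fin n, j < i → S i j = 0) ∧
      ∃ u : Fin n → LaurentSeries ℂ,
        ∀ i j : Fin n,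
          (S.map (dil q 1) * (Λ + A) * S⁻¹) i j
            = if (i : ℕ) = 0 then -u j else if (i : ℕ) = (j : ℕ) + 1 then 1 else 0 := by
  classical
  set L : Matrix (Fin n) (Fin n) (LaurentSeries ℂ) := Λ + A with hLdef
  set S : Matrix (Fin n) (Fin n) (LaurentSeries ℂ) :=
    Matrix.of fun i j => rowSeq q L (n - 1 - (i : ℕ)) j with hSdef
  have hSapp : ∀ i j : Fin n, S i j = rowSeq q L (n - 1 - (i : ℕ)) j := fun i j => rfl
  have htriS : ∀ i j : Fin n, j < i → S i j = 0 := by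
    intro i j hij
    rw [hSapp]
    exact (rowSeq_tri q A Λ hA hΛ (n - 1 - (i : ℕ)) (by omega)).1 j
      (by have := i.isLt; have := Fin.lt_def.mp hij; omega)
  have hdiagS : ∀ i : Fin n, S i i = 1 := by
    intro i
    rw [hSapp]
    exact (rowSeq_tri q A Λ hA hΛ (n - 1 - (i : ℕ)) (by omega)).2 i
      (by have := i.isLt; omega)
  -- determinant and recursion facts, stated for any unipotent upper triangular matrix
  have hdet : ∀ T : Matrix (Fin n) (Fin n) (LaurentSeries ℂ),
      (∀ i, T i i = 1) → (∀ i j : Fin n, j < i → T i j = 0) → IsUnit T.det := by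
    intro T hd ht
    have : T.det = ∏ i, T i i := Matrix.det_of_upperTriangular (fun i j h => ht i j h)
    rw [this]
    simp [hd]
  have hrow : ∀ (T : Matrix (Fin n) (Fin n) (LaurentSeries ℂ)) (i k : Fin n),
      (T.map (dil q 1) * L) i k = stepRow q L (T i) k := by
    intro T i k
    rw [Matrix.mul_apply]
    simp [stepRow, Matrix.map_apply]
  have hSrec : ∀ i : Fin n, 1 ≤ (i : ℕ) → ∀ k : Fin n,
      (S.map (dil q 1) * L) i k = S ⟨(i : ℕ) - 1, by have := i.isLt; omega⟩ k := by
    intro i hi k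
    rw [hrow S i k, hSapp]
    have harith : n - 1 - ((i : ℕ) - 1) = (n - 1 - (i : ℕ)) + 1 := by
      have := i.isLt; omega
    rw [harith]
    rfl
  have hSinv : S * S⁻¹ = 1 := Matrix.mul_nonsing_inv S (hdet S hdiagS htriS)
  refine ⟨S, ⟨hdiagS, htriS,
    fun j => -((S.map (dil q 1) * L * S⁻¹) ⟨0, hn⟩ j), fun i j => ?_⟩, ?_⟩
  · by_cases hi0 : (i : ℕ) = 0
    · rw [if_pos hi0, neg_neg, show i = (⟨0, hn⟩ : Fin n) from Fin.ext hi0]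
    · rw [if_neg hi0]
      have hi : 1 ≤ (i : ℕ) := by omega
      have h1 : (S.map (dil q 1) * L * S⁻¹) i j
          = ∑ k, (S.map (dil q 1) * L) i k * S⁻¹ k j := by
        rw [Matrix.mul_apply]
      rw [h1, Finset.sum_congr rfl (fun k _ => by rw [hSrec i hi k])]
      have h2 : (∑ k, S ⟨(i : ℕ) - 1, by have := i.isLt; omega⟩ k * S⁻¹ k j)
          = (S * S⁻¹) ⟨(i : ℕ) - 1, by have := i.isLt; omega⟩ j := by
        rw [Matrix.mul_apply]
      rw [h2, hSinv, Matrix.one_apply]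
      by_cases hij : (i : ℕ) = (j : ℕ) + 1
      · rw [if_pos hij, if_pos (Fin.ext (by simp; omega))]
      · rw [if_neg hij, if_neg (by rw [Fin.ext_iff]; simp; omega)]
  · rintro S' ⟨hd', ht', u', hu'⟩
    have hinv' : S'⁻¹ * S' = 1 := Matrix.nonsing_inv_mul S' (hdet S' hd' ht')
    set C : Matrix (Fin n) (Fin n) (LaurentSeries ℂ) :=
      Matrix.of fun i j => if (i : ℕ) = 0 then -u' j
        else if (i : ℕ) = (j : ℕ) + 1 then 1 else 0 with hCdef
    have hEq : S'.map (dil q 1) * L = C * S' := by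
      have h1 : S'.map (dil q 1) * L * S'⁻¹ = C := by
        ext i j
        rw [hu' i j]
        rfl
      have h2 : (S'.map (dil q 1) * L * S'⁻¹) * S' = S'.map (dil q 1) * L := by
        rw [Matrix.mul_assoc, hinv', Matrix.mul_one]
      rw [← h2, h1]
    have hstep' : ∀ (a : ℕ) (ha : a < n), 1 ≤ a → ∀ j : Fin n,
        stepRow q L (S' ⟨a, ha⟩) j = S' ⟨a - 1, by omega⟩ j := by
      intro a ha hi j
      set i : Fin n := ⟨a, ha⟩ with hidef
      have hi : 1 ≤ (i : ℕ) := hi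
      show stepRow q L (S' i) j = S' ⟨(i : ℕ) - 1, by omega⟩ j
      have h2 : (S'.map (dil q 1) * L) i j = (C * S') i j := by rw [hEq]
      rw [hrow S' i j] at h2
      rw [h2, Matrix.mul_apply]
      have h3 : ∀ k : Fin n, C i k * S' k j
          = (if (i : ℕ) = (k : ℕ) + 1 then (1 : LaurentSeries ℂ) else 0) * S' k j := by
        intro k
        rw [show C i k = if (i : ℕ) = 0 then -u' k
            else if (i : ℕ) = (k : ℕ) + 1 then 1 else 0 from rfl, if_neg (by omega)]
      rw [Finset.sum_congr rfl (fun k _ => h3 k), sum_shift i hi]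
    have hrows : ∀ m : ℕ, m ≤ n - 1 → ∀ j : Fin n,
        S' ⟨n - 1 - m, by omega⟩ j = rowSeq q L m j := by
      intro m
      induction m with
      | zero =>
        intro _ j
        show S' ⟨n - 1, by omega⟩ j = if (j : ℕ) = n - 1 then 1 else 0
        by_cases hj : (j : ℕ) = n - 1
        · rw [if_pos hj, show j = (⟨n - 1, by omega⟩ : Fin n) from Fin.ext (by simp; omega)]
          exact hd' _
        · rw [if_neg hj]
          exact ht' _ j (by rw [Fin.lt_def]; have := j.isLt; simp; omega)
      | succ m ih =>
        intro hm j
        have ihm := ih (by omega)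
        have hkey := hstep' (n - 1 - m) (by omega) (by omega) j
        have hfun : S' ⟨n - 1 - m, by omega⟩ = rowSeq q L m := funext ihm
        rw [hfun] at hkey
        have hfin : (⟨n - 1 - (m + 1), by omega⟩ : Fin n)
            = ⟨n - 1 - m - 1, by omega⟩ := by
          rw [Fin.ext_iff]; simp; omega
        rw [hfin, ← hkey]
        rfl
    refine Matrix.ext fun i j => ?_
    rw [hSapp]
    have := hrows (n - 1 - (i : ℕ)) (by omega) j
    rw [show (⟨n - 1 - (n - 1 - (i : ℕ)), by omega⟩ : Fin n) = i from
      Fin.ext (by have := i.isLt; simp; omega)] at this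
    exact this
end

section
/- Let n ≥ 1 and q ∈ ℂ with 0 < |q| < 1. Then (1 − ĥτ̂_n)V_n equals the orthogonal complement U_n^⊥ = {F ∈ H_n : ⟨F, Ū⟩ = 0 for all Ū ∈ U_n}, and H_n decomposes as the direct sum H_n = U_n ⊕ (1 − ĥτ̂_n)V_n. (Decomposition (2.18) of the diagonal subalgebra, with Im V_n = U_n^⊥.) -/
namespace OrthAux

variable {q : ℂ}

lemma dil_coeff (q : ℂ) (k : ℤ) (F : LaurentSeries ℂ) (j : ℤ) :
    (dil q k F).coeff j = q ^ (-(k * j)) * F.coeff j := rfl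

lemma dil_zero (q : ℂ) (k : ℤ) : dil q k (0 : LaurentSeries ℂ) = 0 := by
  ext a; simp [dil_coeff]

lemma dil_sub (q : ℂ) (k : ℤ) (X Y : LaurentSeries ℂ) :
    dil q k (X - Y) = dil q k X - dil q k Y := by
  ext a; simp [dil_coeff, HahnSeries.coeff_sub, mul_sub]

lemma dil_dil (hq : q ≠ 0) (a b : ℤ) (F : LaurentSeries ℂ) :
    dil q a (dil q b F) = dil q (a + b) F := by
  ext j
  simp only [dil_coeff, ← mul_assoc, ← zpow_add₀ hq]
  ring_nf

lemma dil_support (hq : q ≠ 0) (k : ℤ) (X : LaurentSeries ℂ) :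
    (dil q k X).support = X.support := by
  ext j
  simp [dil_coeff, Function.mem_support, zpow_ne_zero, hq]

lemma dil_mul (hq : q ≠ 0) (k : ℤ) (X Y : LaurentSeries ℂ) :
    dil q k (X * Y) = dil q k X * dil q k Y := by
  ext a
  rw [dil_coeff, HahnSeries.coeff_mul, HahnSeries.coeff_mul]
  have hAD : Finset.antidiagonal (dil q k X).isPWO_support (dil q k Y).isPWO_support a
      = Finset.antidiagonal X.isPWO_support Y.isPWO_support a := by
    ext ij
    simp [Finset.mem_addAntidiagonal, dil_support hq]
  rw [hAD, Finset.mul_sum]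
  refine Finset.sum_congr rfl (fun ij hij => ?_)
  obtain ⟨-, -, hsum⟩ := Finset.mem_addAntidiagonal.mp hij
  rw [dil_coeff, dil_coeff, ← hsum]
  rw [show (-(k * (ij.1 + ij.2))) = (-(k * ij.1)) + (-(k * ij.2)) by ring, zpow_add₀ hq]
  ring

lemma res_dil (q : ℂ) (k : ℤ) (F : LaurentSeries ℂ) : Res (dil q k F) = Res F := by
  simp [Res, dil_coeff]

lemma res_sub (X Y : LaurentSeries ℂ) : Res (X - Y) = Res X - Res Y := by
  simp [Res, HahnSeries.coeff_sub]

lemma dil_single (q : ℂ) (k s : ℤ) (c : ℂ) :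
    dil q k (HahnSeries.single s c) = HahnSeries.single s (q ^ (-(k * s)) * c) := by
  ext a
  simp only [dil_coeff, HahnSeries.coeff_single]
  split_ifs with h
  · rw [h]
  · exact mul_zero _

lemma res_mul_single (X : LaurentSeries ℂ) (s : ℤ) (c : ℂ) :
    Res (X * HahnSeries.single s c) = X.coeff (-s) * c := by
  rw [Res, show (0:ℤ) = -s + s by ring, HahnSeries.coeff_mul_single_add]

lemma coeff_sum {α : Type*} (s : Finset α) (f : α → LaurentSeries ℂ) (m : ℤ) :
    (∑ i ∈ s, f i).coeff m = ∑ i ∈ s, (f i).coeff m := by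
  classical
  induction s using Finset.cons_induction with
  | empty => simp
  | cons a s ha ih => rw [Finset.sum_cons, Finset.sum_cons, HahnSeries.coeff_add, ih]


lemma exists_G {N : ℕ} (hq : q ≠ 0) (F : Fin (N+1) → LaurentSeries ℂ)
    (hF : ∀ m : ℤ, ∑ j : Fin (N+1), q ^ (-(((j:ℕ):ℤ) * m)) * (F j).coeff m = 0) :
    ∃ G : Fin (N+1) → LaurentSeries ℂ, G 0 = 0 ∧ ∀ j, F j = G j - htau q G j := by
  classical
  set G : Fin (N+1) → LaurentSeries ℂ := fun j =>
    -(∑ i ∈ Finset.univ.filter (fun i : Fin (N+1) => (i:ℕ) < (j:ℕ)),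
        dil q (((i:ℕ):ℤ) - ((j:ℕ):ℤ)) (F i)) with hGdef
  have hGcoeff : ∀ (j : Fin (N+1)) (m : ℤ), (G j).coeff m
      = -∑ i ∈ Finset.univ.filter (fun i : Fin (N+1) => (i:ℕ) < (j:ℕ)),
          q ^ (((((j:ℕ):ℤ)) - ((i:ℕ):ℤ)) * m) * (F i).coeff m := by
    intro j m
    rw [hGdef]
    simp only [HahnSeries.coeff_neg, coeff_sum]
    congr 1
    refine Finset.sum_congr rfl (fun i _ => ?_)
    rw [dil_coeff, show (-((((i:ℕ):ℤ) - ((j:ℕ):ℤ)) * m)) = ((((j:ℕ):ℤ) - ((i:ℕ):ℤ)) * m) by ring]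
  have hG0 : G 0 = 0 := by
    rw [hGdef]
    simp
  refine ⟨G, hG0, fun j => ?_⟩
  ext m
  rw [HahnSeries.coeff_sub]
  show (F j).coeff m = (G j).coeff m - (dil q 1 (G (j+1))).coeff m
  rw [dil_coeff]
  by_cases hj : j = Fin.last N
  · have hj1 : j + 1 = 0 := by rw [hj, Fin.last_add_one]
    rw [hj1, hG0, HahnSeries.coeff_zero, mul_zero, sub_zero, hGcoeff]
    have hnotmem : j ∉ Finset.univ.filter (fun i : Fin (N+1) => (i:ℕ) < (j:ℕ)) := by simp
    have huniv : (Finset.univ : Finset (Fin (N+1)))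
        = insert j (Finset.univ.filter (fun i : Fin (N+1) => (i:ℕ) < (j:ℕ))) := by
      ext i
      simp only [Finset.mem_univ, Finset.mem_insert, Finset.mem_filter, true_and, true_iff]
      rcases Nat.lt_or_ge (i:ℕ) (j:ℕ) with h | h
      · exact Or.inr h
      · left
        have hjN : (j:ℕ) = N := by rw [hj, Fin.val_last]
        have hi : (i:ℕ) ≤ N := Nat.lt_succ_iff.mp i.isLt
        exact Fin.ext (by omega)
    have hFm := hF m
    rw [huniv, Finset.sum_insert hnotmem] at hFm
    have h0 : q ^ (-(((j:ℕ):ℤ) * m)) * (F j).coeff m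
        = -∑ i ∈ Finset.univ.filter (fun i : Fin (N+1) => (i:ℕ) < (j:ℕ)),
            q ^ (-(((i:ℕ):ℤ) * m)) * (F i).coeff m := eq_neg_of_add_eq_zero_left hFm
    have h1 : (F j).coeff m = q ^ (((j:ℕ):ℤ) * m) * (q ^ (-(((j:ℕ):ℤ) * m)) * (F j).coeff m) := by
      rw [← mul_assoc, ← zpow_add₀ hq, add_neg_cancel, zpow_zero, one_mul]
    rw [h1, h0, mul_neg, Finset.mul_sum]
    congr 1
    refine Finset.sum_congr rfl (fun i _ => ?_)
    rw [← mul_assoc, ← zpow_add₀ hq,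
      show (((j:ℕ):ℤ) * m) + (-(((i:ℕ):ℤ) * m)) = ((((j:ℕ):ℤ) - ((i:ℕ):ℤ)) * m) by ring]
  · have hjlt : (j:ℕ) < N := Fin.val_lt_last hj
    have hj1 : ((j+1 : Fin (N+1)) : ℕ) = (j:ℕ) + 1 := by
      rw [Fin.val_add_one, if_neg hj]
    rw [hGcoeff, hGcoeff, hj1]
    have hset : Finset.univ.filter (fun i : Fin (N+1) => (i:ℕ) < (j:ℕ)+1)
        = insert j (Finset.univ.filter (fun i : Fin (N+1) => (i:ℕ) < (j:ℕ))) := by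
      ext i
      simp only [Finset.mem_filter, Finset.mem_univ, true_and, Finset.mem_insert]
      rw [Nat.lt_succ_iff_lt_or_eq, ← Fin.val_eq_val, or_comm]
    rw [hset, Finset.sum_insert (by simp)]
    push_cast
    rw [mul_neg, sub_neg_eq_add, mul_add]
    have e1 : q ^ (-(1 * m)) * (q ^ (((((j:ℕ):ℤ)) + 1 - ((j:ℕ):ℤ)) * m) * (F j).coeff m)
        = (F j).coeff m := by
      rw [← mul_assoc, ← zpow_add₀ hq,
        show (-(1*m)) + (((((j:ℕ):ℤ)) + 1 - ((j:ℕ):ℤ)) * m) = 0 by ring, zpow_zero, one_mul]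
    rw [e1, Finset.mul_sum]
    have e3 : ∑ i ∈ Finset.univ.filter (fun i : Fin (N+1) => (i:ℕ) < (j:ℕ)),
          q ^ (-(1 * m)) * (q ^ (((((j:ℕ):ℤ)) + 1 - ((i:ℕ):ℤ)) * m) * (F i).coeff m)
        = ∑ i ∈ Finset.univ.filter (fun i : Fin (N+1) => (i:ℕ) < (j:ℕ)),
            q ^ (((((j:ℕ):ℤ)) - ((i:ℕ):ℤ)) * m) * (F i).coeff m := by
      refine Finset.sum_congr rfl (fun i _ => ?_)
      rw [← mul_assoc, ← zpow_add₀ hq,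
        show (-(1*m)) + (((((j:ℕ):ℤ)) + 1 - ((i:ℕ):ℤ)) * m) = ((((j:ℕ):ℤ) - ((i:ℕ):ℤ)) * m) by ring]
    rw [e3]
    ring

lemma phi_extract {N : ℕ} (F : Fin (N+1) → LaurentSeries ℂ) (m : ℤ) :
    pair F (fun j => dil q (-((j:ℕ):ℤ)) (HahnSeries.single (-m) 1)) =
      ∑ j : Fin (N+1), q ^ (-(((j:ℕ):ℤ) * m)) * (F j).coeff m := by
  unfold pair
  refine Finset.sum_congr rfl (fun j _ => ?_)
  show Res (F j * dil q (-((j:ℕ):ℤ)) (HahnSeries.single (-m) 1)) = _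
  rw [dil_single, res_mul_single, neg_neg, mul_one,
    show (-((-((j:ℕ):ℤ)) * (-m))) = (-(((j:ℕ):ℤ) * m)) by ring]
  ring

lemma pair_im_u {N : ℕ} (hq : q ≠ 0) (G : Fin (N+1) → LaurentSeries ℂ) (hG0 : G 0 = 0)
    (u : LaurentSeries ℂ) :
    pair (fun j => G j - htau q G j) (fun j => dil q (-((j:ℕ):ℤ)) u) = 0 := by
  have key : ∀ j : Fin (N+1), Res ((G j - htau q G j) * dil q (-((j:ℕ):ℤ)) u)
      = Res (G j * dil q (-((j:ℕ):ℤ)) u)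
        - Res (G (j+1) * dil q (-(((j+1 : Fin (N+1)):ℕ):ℤ)) u) := by
    intro j
    rw [sub_mul, res_sub]
    congr 1
    show Res (dil q 1 (G (j+1)) * dil q (-((j:ℕ):ℤ)) u) = _
    by_cases hj : j = Fin.last N
    · have hj1 : j + 1 = 0 := by rw [hj, Fin.last_add_one]
      rw [hj1, hG0, dil_zero, zero_mul, zero_mul]
    · have hj1 : ((j+1 : Fin (N+1)) : ℕ) = (j:ℕ) + 1 := by rw [Fin.val_add_one, if_neg hj]
      rw [hj1,
        show dil q (-((j:ℕ):ℤ)) u = dil q 1 (dil q (-(((j:ℕ):ℤ)+1)) u) by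
          rw [dil_dil hq]; congr 1; ring,
        ← dil_mul hq, res_dil]
      norm_cast
  have hsum : pair (fun j => G j - htau q G j) (fun j => dil q (-((j:ℕ):ℤ)) u)
      = ∑ j : Fin (N+1), (Res (G j * dil q (-((j:ℕ):ℤ)) u)
          - Res (G (j+1) * dil q (-(((j+1 : Fin (N+1)):ℕ):ℤ)) u)) := by
    unfold pair
    exact Finset.sum_congr rfl (fun j _ => key j)
  rw [hsum, Finset.sum_sub_distrib,
    show (∑ j : Fin (N+1), Res (G (j+1) * dil q (-(((j+1 : Fin (N+1)):ℕ):ℤ)) u))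
      = ∑ j : Fin (N+1), Res (G j * dil q (-((j:ℕ):ℤ)) u) from
      Fintype.sum_equiv (Equiv.addRight 1) _ _ (fun j => rfl),
    sub_self]

end OrthAux

/-- Decomposition (2.18): `(1 − ĥτ̂_n) V_n` is the orthogonal complement of `U_n`
(here `V_n = {F : F 0 = 0}`), and `H_n = U_n ⊕ (1 − ĥτ̂_n) V_n` is a direct sum. -/
theorem orthogonal_decomposition (n : ℕ) [NeZero n] (q : ℂ)
    (hq0 : 0 < ‖q‖) (hq1 : ‖q‖ < 1) :
    (∀ F : Fin n → LaurentSeries ℂ,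
        (∃ G : Fin n → LaurentSeries ℂ, G 0 = 0 ∧ ∀ j, F j = G j - htau q G j) ↔
          ∀ Ubar : Fin n → LaurentSeries ℂ, InU q Ubar → pair F Ubar = 0) ∧
    (∀ F : Fin n → LaurentSeries ℂ,
        ∃! UV : (Fin n → LaurentSeries ℂ) × (Fin n → LaurentSeries ℂ),
          InU q UV.1 ∧
          (∃ G : Fin n → LaurentSeries ℂ, G 0 = 0 ∧ ∀ j, UV.2 j = G j - htau q G j) ∧
          ∀ j, F j = UV.1 j + UV.2 j) := by
  obtain ⟨N, rfl⟩ : ∃ m, n = m + 1 :=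
    ⟨n - 1, (Nat.succ_pred_eq_of_pos (Nat.pos_of_ne_zero (NeZero.ne n))).symm⟩
  have hq : q ≠ 0 := by
    intro h
    rw [h] at hq0
    simp at hq0
  have hNne : ((N:ℂ)+1) ≠ 0 := Nat.cast_add_one_ne_zero N
  constructor
  · intro F
    constructor
    · rintro ⟨G, hG0, hFG⟩ Ubar ⟨u, hu⟩
      rw [show F = fun j => G j - htau q G j from funext hFG,
          show Ubar = fun j : Fin (N+1) => dil q (-((j:ℕ):ℤ)) u from funext hu]
      exact OrthAux.pair_im_u hq G hG0 u
    · intro h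
      apply OrthAux.exists_G hq
      intro m
      have h2 := h (fun j => dil q (-((j:ℕ):ℤ)) (HahnSeries.single (-m) 1))
        ⟨HahnSeries.single (-m) 1, fun j => rfl⟩
      rwa [OrthAux.phi_extract] at h2
  · intro F
    set u : LaurentSeries ℂ := ((N:ℂ)+1)⁻¹ • ∑ i : Fin (N+1), dil q ((i:ℕ):ℤ) (F i) with hu
    set U : Fin (N+1) → LaurentSeries ℂ := fun j => dil q (-((j:ℕ):ℤ)) u with hU
    set V : Fin (N+1) → LaurentSeries ℂ := fun j => F j - U j with hV
    have hucoeff : ∀ m : ℤ, u.coeff m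
        = ((N:ℂ)+1)⁻¹ * ∑ i : Fin (N+1), q ^ (-(((i:ℕ):ℤ) * m)) * (F i).coeff m := by
      intro m
      rw [hu, HahnSeries.coeff_smul, OrthAux.coeff_sum, smul_eq_mul]
      congr 1
    have hVphi : ∀ m : ℤ, ∑ j : Fin (N+1), q ^ (-(((j:ℕ):ℤ) * m)) * (V j).coeff m = 0 := by
      intro m
      have hterm : ∀ j : Fin (N+1), q ^ (-(((j:ℕ):ℤ) * m)) * (V j).coeff m
          = q ^ (-(((j:ℕ):ℤ) * m)) * (F j).coeff m
            - ((N:ℂ)+1)⁻¹ * ∑ i : Fin (N+1), q ^ (-(((i:ℕ):ℤ) * m)) * (F i).coeff m := by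
        intro j
        rw [hV, HahnSeries.coeff_sub, mul_sub]
        congr 1
        rw [hU, OrthAux.dil_coeff, hucoeff m, ← mul_assoc, ← mul_assoc, ← zpow_add₀ hq,
          show (-(((j:ℕ):ℤ) * m)) + (-((-((j:ℕ):ℤ)) * m)) = 0 by ring, zpow_zero, one_mul]
      rw [Finset.sum_congr rfl (fun j _ => hterm j), Finset.sum_sub_distrib,
        Finset.sum_const, Finset.card_univ, Fintype.card_fin, nsmul_eq_mul]
      push_cast
      field_simp
      ring
    obtain ⟨Gv, hGv0, hGv⟩ := OrthAux.exists_G hq V hVphi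
    refine ⟨(U, V), ⟨⟨u, fun j => rfl⟩, ⟨Gv, hGv0, hGv⟩, fun j => by rw [hV]; ring⟩, ?_⟩
    rintro ⟨U', V'⟩ ⟨⟨u', hu'⟩, ⟨G', hG0', hG'⟩, hsum'⟩
    have hu'' : ∀ j : Fin (N+1), U' j = dil q (-((j:ℕ):ℤ)) u' := hu'
    have hsum'' : ∀ j : Fin (N+1), F j = U' j + V' j := hsum'
    have hG'' : ∀ j : Fin (N+1), V' j = G' j - htau q G' j := hG'
    have hdiff : ∀ j, V j - V' j = dil q (-((j:ℕ):ℤ)) (u' - u) := by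
      intro j
      rw [OrthAux.dil_sub, ← hu'' j]
      show F j - U j - V' j = U' j - U j
      rw [hsum'' j]
      ring
    have hW : ∀ m : ℤ, ∑ j : Fin (N+1), q ^ (-(((j:ℕ):ℤ) * m)) * ((V j - V' j)).coeff m = 0 := by
      intro m
      have hrep : ∀ j, V j - V' j
          = (fun j => Gv j - G' j) j - htau q (fun j => Gv j - G' j) j := by
        intro j
        rw [hGv j, hG'' j]
        show (Gv j - dil q 1 (Gv (j+1))) - (G' j - dil q 1 (G' (j+1)))
          = (Gv j - G' j) - dil q 1 (Gv (j+1) - G' (j+1))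
        rw [OrthAux.dil_sub]
        ring
      have hpair : pair (fun j => V j - V' j)
          (fun j => dil q (-((j:ℕ):ℤ)) (HahnSeries.single (-m) 1)) = 0 := by
        rw [show (fun j => V j - V' j)
            = fun j => (fun j => Gv j - G' j) j - htau q (fun j => Gv j - G' j) j from
          funext hrep]
        exact OrthAux.pair_im_u hq _ (by rw [hGv0, hG0', sub_zero]) _
      rwa [OrthAux.phi_extract] at hpair
    have hw0 : u' - u = 0 := by
      ext m
      have h3 := hW m
      rw [Finset.sum_congr rfl (fun j _ => by
        rw [hdiff j, OrthAux.dil_coeff, ← mul_assoc, ← zpow_add₀ hq,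
          show (-(((j:ℕ):ℤ) * m)) + (-((-((j:ℕ):ℤ)) * m)) = 0 by ring, zpow_zero, one_mul])] at h3
      rw [Finset.sum_const, Finset.card_univ, Fintype.card_fin, nsmul_eq_mul] at h3
      rw [HahnSeries.coeff_zero]
      have : ((N:ℂ)+1) * (u' - u).coeff m = 0 := by push_cast at h3 ⊢; exact h3
      exact (mul_eq_zero.mp this).resolve_left hNne
    have huu : u' = u := sub_eq_zero.mp hw0
    have hUU : U' = U := funext fun j => by rw [hu'' j, huu]
    have hVV : V' = V := funext fun j => by
      have := hdiff j
      rw [hw0, OrthAux.dil_zero] at this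
      exact (sub_eq_zero.mp this).symm
    rw [Prod.ext_iff]
    exact ⟨hUU, hVV⟩
end
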